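/- arXiv:1611.06506 — 8 statements merged into one kernel-verified Lean document; each statement's English description precedes it below -/
import Mathlib

section
/- Let p be a prime and define f_p(n) = ∏_{1 ≤ i ≤ n, p∤i} i. Then for an odd prime p with α ≥ 1, or for p = 2 with α ≥ 2, one has p^{2α} divides f_p(p^α n) - f_p(p^α)^n for all n ≥ 0. -/
/-- `f_p(n) = ∏_{1 ≤ i ≤ n, p ∤ i} i`. -/
def fp (p n : ℕ) : ℕ :=
  ∏ i ∈ (Finset.Icc 1 n).filter (fun i => ¬ p ∣ i), i

open Finset

/-- product of `(f x + t)` with `t` square-zero. -/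
lemma prod_add_nilp {R : Type*} [CommRing R] (t : R) (ht : t * t = 0)
    (s : Finset ℕ) (f : ℕ → R) :
    ∏ x ∈ s, (f x + t) = (∏ x ∈ s, f x) + t * ∑ x ∈ s, ∏ y ∈ s.erase x, f y := by
  classical
  induction s using Finset.cons_induction with
  | empty => simp
  | cons a s ha ih =>
    rw [Finset.prod_cons, ih, Finset.prod_cons, Finset.sum_cons, Finset.erase_cons ha]
    have h2 : ∀ x ∈ s, (∏ y ∈ (Finset.cons a s ha).erase x, f y)
        = f a * ∏ y ∈ s.erase x, f y := by
      intro x hx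
      have hxa : x ≠ a := by rintro rfl; exact ha hx
      rw [Finset.cons_eq_insert, Finset.erase_insert_of_ne hxa.symm,
        Finset.prod_insert (fun hc => ha (Finset.mem_of_mem_erase hc))]
    rw [Finset.sum_congr rfl h2, ← Finset.mul_sum]
    linear_combination (∑ x ∈ s, ∏ y ∈ s.erase x, f y) * ht

lemma fp_split (p a b : ℕ) :
    fp p (a + b) = fp p a * ∏ i ∈ (Finset.Ioc a (a + b)).filter (fun i => ¬ p ∣ i), i := by
  unfold fp
  rw [show Finset.Icc 1 (a + b) = Finset.Ioc 0 (a + b) from (Finset.Icc_add_one_left_eq_Ioc 0 _),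
    show Finset.Icc 1 a = Finset.Ioc 0 a from (Finset.Icc_add_one_left_eq_Ioc 0 _),
    ← Finset.Ioc_union_Ioc_eq_Ioc (Nat.zero_le a) (Nat.le_add_right a b),
    Finset.filter_union, Finset.prod_union]
  apply Finset.disjoint_filter_filter
  rw [Finset.disjoint_left]
  intro x hx hx'
  simp only [Finset.mem_Ioc] at hx hx'
  omega

lemma block_prod (p a b : ℕ) (hpa : p ∣ a) :
    ∏ i ∈ (Finset.Ioc a (a + b)).filter (fun i => ¬ p ∣ i), i
      = ∏ j ∈ (Finset.Icc 1 b).filter (fun j => ¬ p ∣ j), (a + j) := by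
  rw [show Finset.Icc 1 b = Finset.Ioc 0 b from (Finset.Icc_add_one_left_eq_Ioc 0 _)]
  rw [show Finset.Ioc a (a + b) = (Finset.Ioc 0 b).map (addLeftEmbedding a) by
    rw [Finset.map_add_left_Ioc]; simp]
  rw [Finset.filter_map, Finset.prod_map]
  simp only [addLeftEmbedding_apply, Function.comp_def]
  apply Finset.prod_congr _ (fun _ _ => rfl)
  congr 1
  ext j
  simp [Nat.dvd_add_right hpa]

section key

variable (p α : ℕ) (hp : p.Prime) (h : (Odd p ∧ 1 ≤ α) ∨ (p = 2 ∧ 2 ≤ α))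

include hp h in
lemma key_sum :
    p ^ α ∣ ∑ j ∈ (Finset.Icc 1 (p ^ α)).filter (fun i => ¬ p ∣ i),
      ∏ k ∈ ((Finset.Icc 1 (p ^ α)).filter (fun i => ¬ p ∣ i)).erase j, k := by
  classical
  have hα : 1 ≤ α := by rcases h with ⟨_, h⟩ | ⟨_, h⟩ <;> omega
  set q := p ^ α with hq
  set S := (Finset.Icc 1 q).filter (fun i => ¬ p ∣ i) with hS
  have hpq : p ∣ q := dvd_pow_self p (by omega)
  haveI : NeZero q := ⟨pow_ne_zero _ hp.pos.ne'⟩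
  have hmem : ∀ j ∈ S, 1 ≤ j ∧ j ≤ q ∧ ¬ p ∣ j := by
    intro j hj
    simp only [hS, Finset.mem_filter, Finset.mem_Icc] at hj
    tauto
  have hgmem : ∀ j ∈ S, q - j ∈ S := by
    intro j hj
    obtain ⟨h1, h2, h3⟩ := hmem j hj
    have hjq : j < q := lt_of_le_of_ne h2 (by rintro rfl; exact h3 hpq)
    simp only [hS, Finset.mem_filter, Finset.mem_Icc]
    refine ⟨⟨by omega, by omega⟩, fun hd => h3 ?_⟩
    have hdd := Nat.dvd_sub hpq hd
    rwa [Nat.sub_sub_self h2] at hdd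
  have hne : ∀ j ∈ S, q - j ≠ j := by
    intro j hj hc
    obtain ⟨h1, h2, h3⟩ := hmem j hj
    have h2j : q = 2 * j := by omega
    rcases h with ⟨hodd, _⟩ | ⟨hp2, hα2⟩
    · rcases (hp.dvd_mul.mp (h2j ▸ hpq)) with hd2 | hdj
      · have := Nat.le_of_dvd (by norm_num) hd2
        interval_cases p <;> simp_all [Nat.odd_iff]
      · exact h3 hdj
    · subst hp2
      have hpow : 2 * 2 ^ (α - 1) = 2 ^ α := by
        rw [← pow_succ']
        congr 1
        omega
      have hjval : j = 2 ^ (α - 1) := by omega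
      have : 2 ∣ j := by
        rw [hjval]
        exact dvd_pow_self 2 (by omega)
      exact h3 this
  have hz : ((∑ j ∈ S, ∏ k ∈ S.erase j, k : ℕ) : ZMod q) = 0 := by
    push_cast
    apply Finset.sum_involution (fun j _ => q - j) ?_ (fun j hj _ => hne j hj)
      (fun j hj => hgmem j hj) ?_
    · intro j hj
      obtain ⟨h1, h2, h3⟩ := hmem j hj
      have hqj : q - j ∈ S.erase j := Finset.mem_erase.mpr ⟨hne j hj, hgmem j hj⟩
      have hjm : j ∈ S.erase (q - j) := Finset.mem_erase.mpr ⟨fun hc => hne j hj hc.symm, hj⟩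
      rw [← Finset.mul_prod_erase _ _ hqj, ← Finset.mul_prod_erase _ _ hjm]
      have hcomm : (S.erase j).erase (q - j) = (S.erase (q - j)).erase j := by
        ext x; simp only [Finset.mem_erase]; tauto
      rw [hcomm, ← add_mul]
      have : ((q - j : ℕ) : ZMod q) + (j : ℕ) = 0 := by
        rw [← Nat.cast_add, Nat.sub_add_cancel h2, ZMod.natCast_self]
      rw [this, zero_mul]
    · intro j hj
      obtain ⟨h1, h2, h3⟩ := hmem j hj
      show q - (q - j) = j
      omega
  exact (ZMod.natCast_eq_zero_iff _ _).mp hz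

end key

lemma block_cong (p α : ℕ) (hp : p.Prime)
    (h : (Odd p ∧ 1 ≤ α) ∨ (p = 2 ∧ 2 ≤ α)) (n : ℕ) :
    ((∏ j ∈ (Finset.Icc 1 (p ^ α)).filter (fun i => ¬ p ∣ i), (p ^ α * n + j) : ℕ)
      : ZMod (p ^ (2 * α))) = ((fp p (p ^ α) : ℕ) : ZMod (p ^ (2 * α))) := by
  classical
  have hα : 1 ≤ α := by rcases h with ⟨_, h⟩ | ⟨_, h⟩ <;> omega
  set q := p ^ α with hq
  set Q := p ^ (2 * α) with hQ
  set S := (Finset.Icc 1 q).filter (fun i => ¬ p ∣ i) with hS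
  haveI : NeZero Q := ⟨pow_ne_zero _ hp.pos.ne'⟩
  have hQqq : Q = q * q := by rw [hq, hQ, two_mul, pow_add]
  set t : ZMod Q := ((q * n : ℕ) : ZMod Q) with hT
  have ht : t * t = 0 := by
    rw [hT, ← Nat.cast_mul, ZMod.natCast_eq_zero_iff]
    exact ⟨n * n, by rw [hQqq]; ring⟩
  rw [Nat.cast_prod]
  have hterm : ∀ j ∈ S, ((q * n + j : ℕ) : ZMod Q) = (j : ZMod Q) + t := by
    intro j _
    rw [hT, Nat.cast_add, add_comm]
  rw [Finset.prod_congr rfl hterm, prod_add_nilp t ht]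
  obtain ⟨m, hm⟩ := key_sum p α hp h
  have hsum : (∑ j ∈ S, ∏ k ∈ S.erase j, (k : ZMod Q))
      = ((∑ j ∈ S, ∏ k ∈ S.erase j, k : ℕ) : ZMod Q) := by push_cast; rfl
  rw [hsum, hm]
  have hz : t * ((p ^ α * m : ℕ) : ZMod Q) = 0 := by
    rw [hT, ← Nat.cast_mul, ZMod.natCast_eq_zero_iff]
    exact ⟨n * m, by rw [hQqq, hq]; ring⟩
  rw [hz, add_zero]
  unfold fp
  rw [Nat.cast_prod]

theorem stmt2 (p α : ℕ) (hp : p.Prime)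
    (h : (Odd p ∧ 1 ≤ α) ∨ (p = 2 ∧ 2 ≤ α)) (n : ℕ) :
    ((p : ℤ) ^ (2 * α)) ∣ (fp p (p ^ α * n) : ℤ) - (fp p (p ^ α) : ℤ) ^ n := by
  classical
  have hα : 1 ≤ α := by rcases h with ⟨_, h⟩ | ⟨_, h⟩ <;> omega
  set q := p ^ α with hq
  set Q := p ^ (2 * α) with hQ
  haveI : NeZero Q := ⟨pow_ne_zero _ hp.pos.ne'⟩
  suffices hs : ((fp p (q * n) : ℕ) : ZMod Q) = ((fp p q : ℕ) : ZMod Q) ^ n by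
    have h0 : (((fp p (q * n) : ℤ) - (fp p q : ℤ) ^ n : ℤ) : ZMod Q) = 0 := by
      push_cast
      rw [hs]
      ring
    have hd := (ZMod.intCast_zmod_eq_zero_iff_dvd _ _).mp h0
    rw [hQ] at hd
    push_cast at hd
    exact hd
  induction n with
  | zero => simp [fp]
  | succ n ih =>
    have hsplit := fp_split p (q * n) q
    have hblock := block_prod p (q * n) q
      (Dvd.dvd.mul_right (dvd_pow_self p (by omega)) n)
    rw [show q * (n + 1) = q * n + q by ring, hsplit, hblock, Nat.cast_mul, ih, pow_succ]
    congr 1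
    exact block_cong p α hp h n
end

section
/- Let p be an odd prime, τ an integer, and m = p^α a, l = p^β b with p ∤ a, p ∤ b, α ≥ 1, β ≥ 0. Then p^{2α} divides C(m,l)·C(mτ+l-1, m-1) - C(m/p, l/p)·C((mτ+l)/p - 1, m/p - 1), where the second term is defined to be zero when β = 0. -/
/-- Binomial coefficient `C(n,k)` with integer upper argument, extended to
negative `n` via `C(n,k) = (-1)^k * C(-n+k-1, k)`. -/
def ichoose (n : ℤ) (k : ℕ) : ℤ :=
  if 0 ≤ n then ((n.toNat).choose k : ℤ)
  else (-1) ^ k * (((-n + k - 1).toNat).choose k : ℤ)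

open Finset

lemma ichoose_zero (x : ℤ) : ichoose x 0 = 1 := by
  unfold ichoose; split <;> simp

lemma ichoose_succ_mul (x : ℤ) (k : ℕ) :
    ichoose x (k + 1) * (k + 1) = ichoose x k * (x - k) := by
  rcases le_or_gt 0 x with hx | hx
  · simp only [ichoose, if_pos hx]
    obtain ⟨n, rfl⟩ : ∃ n : ℕ, x = n := ⟨x.toNat, (Int.toNat_of_nonneg hx).symm⟩
    rw [Int.toNat_natCast]
    rcases le_or_gt k n with h | h
    · have hc := Nat.choose_succ_right_eq n k
      have hcast : ((n - k : ℕ) : ℤ) = (n : ℤ) - k := by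
        rw [Nat.cast_sub h]
      rw [← hcast]
      exact_mod_cast hc
    · rw [Nat.choose_eq_zero_of_lt h, Nat.choose_eq_zero_of_lt (Nat.lt_succ_of_lt h)]
      simp
  · simp only [ichoose, if_neg (not_le.mpr hx)]
    obtain ⟨y, hy⟩ : ∃ y : ℕ, x = -(y + 1 : ℤ) := ⟨(-x - 1).toNat, by omega⟩
    have h1 : (-x + ((k + 1 : ℕ) : ℤ) - 1).toNat = y + k + 1 := by push_cast; omega
    have h2 : (-x + (k : ℤ) - 1).toNat = y + k := by omega
    rw [h1, h2, hy]
    have hs : ((y + k + 1) * (y + k).choose k : ℤ) = ((y + k + 1).choose (k + 1) * (k + 1) : ℤ) := by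
      exact_mod_cast Nat.add_one_mul_choose_eq (y + k) k
    push_cast
    linear_combination (-1 : ℤ) ^ k * hs

lemma ichoose_prod (x : ℤ) (k : ℕ) :
    ichoose x k * ∏ j ∈ Icc 1 k, (j : ℤ) = ∏ i ∈ Finset.range k, (x - i) := by
  induction k with
  | zero => simp [ichoose_zero]
  | succ n ih =>
      rw [Finset.prod_range_succ, ← ih, Finset.prod_Icc_succ_top (Nat.le_add_left 1 n)]
      push_cast
      linear_combination (∏ j ∈ Icc 1 n, (j : ℤ)) * ichoose_succ_mul x n

lemma Icc_prod_pos (k : ℕ) : (0 : ℤ) < ∏ j ∈ Icc 1 k, (j : ℤ) := by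
  apply Finset.prod_pos
  intro j hj
  have := (Finset.mem_Icc.mp hj).1
  positivity

lemma ichoose_succ_mul' (x : ℤ) (k : ℕ) :
    ichoose x (k + 1) * (k + 1) = x * ichoose (x - 1) k := by
  have h1 := ichoose_prod x (k + 1)
  have h2 := ichoose_prod (x - 1) k
  have h3 : ∏ i ∈ Finset.range (k + 1), (x - i) = x * ∏ i ∈ Finset.range k, (x - 1 - i) := by
    rw [Finset.prod_range_succ']
    rw [Finset.prod_congr rfl (fun i _ => show x - (i + 1 : ℕ) = x - 1 - i by push_cast; ring)]
    ring
  rw [Finset.prod_Icc_succ_top (Nat.le_add_left 1 k)] at h1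
  apply mul_right_cancel₀ (Icc_prod_pos k).ne'
  push_cast at h1 ⊢
  linear_combination h1 - x * h2 + h3

lemma prod_range_eq_Icc (x : ℤ) (k : ℕ) :
    ∏ i ∈ Finset.range k, (x - i) = ∏ j ∈ Icc 1 k, (x - k + j) := by
  refine Finset.prod_nbij' (fun i => k - i) (fun j => k - j) ?_ ?_ ?_ ?_ ?_
  · intro i hi; simp only [Finset.mem_range] at hi; simp only [Finset.mem_Icc]; omega
  · intro j hj; simp only [Finset.mem_Icc] at hj; simp only [Finset.mem_range]; omega
  · intro i hi; simp only [Finset.mem_range] at hi; omega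
  · intro j hj; simp only [Finset.mem_Icc] at hj; omega
  · intro i hi; simp only [Finset.mem_range] at hi
    have : ((k - i : ℕ) : ℤ) = (k : ℤ) - i := by omega
    rw [this]; ring

lemma prod_split (p : ℕ) (hp : 0 < p) (f : ℕ → ℤ) (c : ℕ) :
    ∏ j ∈ Icc 1 c, f j =
      (∏ j ∈ Icc 1 (c / p), f (p * j)) *
        ∏ j ∈ (Icc 1 c).filter (fun j => ¬ p ∣ j), f j := by
  rw [← Finset.prod_filter_mul_prod_filter_not (Icc 1 c) (fun j => p ∣ j) f]
  congr 1
  refine (Finset.prod_nbij' (fun j => p * j) (fun j => j / p) ?_ ?_ ?_ ?_ ?_).symm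
  · intro j hj
    simp only [Finset.mem_Icc] at hj
    simp only [Finset.mem_filter, Finset.mem_Icc]
    refine ⟨⟨by nlinarith, ?_⟩, Dvd.intro j rfl⟩
    calc p * j ≤ p * (c / p) := by exact Nat.mul_le_mul_left p hj.2
    _ ≤ c := Nat.mul_div_le c p
  · intro j hj
    simp only [Finset.mem_filter, Finset.mem_Icc] at hj
    obtain ⟨⟨h1, h2⟩, h3⟩ := hj
    simp only [Finset.mem_Icc]
    constructor
    · have : p ≤ j := Nat.le_of_dvd (by omega) h3
      exact Nat.one_le_div_iff hp |>.mpr this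
    · exact Nat.div_le_div_right h2
  · intro j _; exact Nat.mul_div_cancel_left j hp
  · intro j hj
    simp only [Finset.mem_filter, Finset.mem_Icc] at hj
    exact Nat.mul_div_cancel' hj.2 
  · intro j _; rfl

lemma prod_invol (p n : ℕ) (hn : p ∣ n) (h0 : 0 < n) (f : ℕ → ℤ) :
    ∏ j ∈ (Icc 1 n).filter (fun j => ¬ p ∣ j), f j
      = ∏ j ∈ (Icc 1 n).filter (fun j => ¬ p ∣ j), f (n - j) := by
  refine Finset.prod_nbij' (fun j => n - j) (fun j => n - j) ?_ ?_ ?_ ?_ ?_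
  · intro j hj
    simp only [Finset.mem_filter, Finset.mem_Icc] at hj ⊢
    obtain ⟨⟨h1, h2⟩, h3⟩ := hj
    have hne : j ≠ n := by rintro rfl; exact h3 hn
    refine ⟨⟨by omega, by omega⟩, fun hd => h3 ?_⟩
    have := Nat.dvd_sub hn hd
    rwa [Nat.sub_sub_self h2] at this
  · intro j hj
    simp only [Finset.mem_filter, Finset.mem_Icc] at hj ⊢
    obtain ⟨⟨h1, h2⟩, h3⟩ := hj
    have hne : j ≠ n := by rintro rfl; exact h3 hn
    refine ⟨⟨by omega, by omega⟩, fun hd => h3 ?_⟩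
    have := Nat.dvd_sub hn hd
    rwa [Nat.sub_sub_self h2] at this
  · intro j hj
    simp only [Finset.mem_filter, Finset.mem_Icc] at hj; omega
  · intro j hj
    simp only [Finset.mem_filter, Finset.mem_Icc] at hj; omega
  · intro j hj
    rw [Nat.sub_sub_self]
    simp only [Finset.mem_filter, Finset.mem_Icc] at hj
    exact hj.1.2

lemma filter_Icc_pred (p n : ℕ) (hn : p ∣ n) (h0 : 0 < n) :
    (Icc 1 (n - 1)).filter (fun j => ¬ p ∣ j) = (Icc 1 n).filter (fun j => ¬ p ∣ j) := by
  ext j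
  simp only [Finset.mem_filter, Finset.mem_Icc]
  constructor
  · rintro ⟨⟨h1, h2⟩, h3⟩; exact ⟨⟨h1, by omega⟩, h3⟩
  · rintro ⟨⟨h1, h2⟩, h3⟩
    have hne : j ≠ n := by rintro rfl; exact h3 hn
    exact ⟨⟨h1, by omega⟩, h3⟩

lemma prod_congr_dvd (q : ℤ) (s : Finset ℕ) (f g : ℕ → ℤ)
    (h : ∀ j ∈ s, q ∣ f j - g j) : q ∣ (∏ j ∈ s, f j) - ∏ j ∈ s, g j := by
  classical
  induction s using Finset.induction_on with
  | empty => simp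
  | @insert x s' hx ih =>
      rw [Finset.prod_insert hx, Finset.prod_insert hx]
      have h1 := h x (Finset.mem_insert_self x s')
      have h2 := ih (fun j hj => h j (Finset.mem_insert_of_mem hj))
      have : f x * ∏ j ∈ s', f j - g x * ∏ j ∈ s', g j
          = f x * ((∏ j ∈ s', f j) - ∏ j ∈ s', g j) + (f x - g x) * ∏ j ∈ s', g j := by ring
      rw [this]
      exact dvd_add (Dvd.dvd.mul_left h2 _) (Dvd.dvd.mul_right h1 _)

lemma key_ratio (p : ℕ) (hp : 0 < p) (c c' : ℕ) (hdiv : c / p = c')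
    (g g' : ℕ → ℤ) (hgg : ∀ j, g (p * j) = p * g' j)
    (X Y : ℤ)
    (hX : X * ∏ j ∈ Icc 1 c, (j : ℤ) = ∏ j ∈ Icc 1 c, g j)
    (hY : Y * ∏ j ∈ Icc 1 c', (j : ℤ) = ∏ j ∈ Icc 1 c', g' j) :
    X * ∏ j ∈ (Icc 1 c).filter (fun j => ¬ p ∣ j), (j : ℤ)
      = Y * ∏ j ∈ (Icc 1 c).filter (fun j => ¬ p ∣ j), g j := by
  have e1 := prod_split p hp (fun j => (j : ℤ)) c
  have e2 := prod_split p hp g c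
  rw [hdiv] at e1 e2
  rw [e1, e2] at hX
  have e3 : ∏ j ∈ Icc 1 c', ((p * j : ℕ) : ℤ) = (p : ℤ) ^ c' * ∏ j ∈ Icc 1 c', (j : ℤ) := by
    rw [Finset.prod_congr rfl (fun j _ => show ((p * j : ℕ) : ℤ) = (p : ℤ) * j by push_cast; ring)]
    rw [Finset.prod_mul_distrib, Finset.prod_const, Nat.card_Icc]
    norm_num
  have e4 : ∏ j ∈ Icc 1 c', g (p * j) = (p : ℤ) ^ c' * ∏ j ∈ Icc 1 c', g' j := by
    rw [Finset.prod_congr rfl (fun j _ => hgg j)]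
    rw [Finset.prod_mul_distrib, Finset.prod_const, Nat.card_Icc]
    norm_num
  rw [e3, e4] at hX
  apply mul_right_cancel₀
    (show (p : ℤ) ^ c' * ∏ j ∈ Icc 1 c', (j : ℤ) ≠ 0 from
      mul_ne_zero (pow_ne_zero _ (by exact_mod_cast hp.ne')) (Icc_prod_pos c').ne')
  linear_combination hX - ((p : ℤ) ^ c' * ∏ j ∈ (Icc 1 c).filter (fun j => ¬ p ∣ j), g j) * hY

theorem stmt4 (p : ℕ) (hp : p.Prime) (hodd : Odd p) (τ : ℤ)
    (α β a b : ℕ) (hα : 1 ≤ α) (ha : ¬ p ∣ a) (hb : ¬ p ∣ b)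
    (m l : ℕ) (hm : m = p ^ α * a) (hl : l = p ^ β * b) :
    ((p : ℤ) ^ (2 * α)) ∣
      ichoose (m : ℤ) l * ichoose ((m : ℤ) * τ + l - 1) (m - 1) -
        (if β = 0 then 0 else
          ichoose ((m / p : ℕ) : ℤ) (l / p) *
            ichoose (((m : ℤ) * τ + l) / p - 1) (m / p - 1)) := by
  have hp0 : 0 < p := hp.pos
  have hp1 : 1 < p := hp.one_lt
  have hpz : Prime (p : ℤ) := Nat.prime_iff_prime_int.mp hp
  have hcop : ∀ (t : ℕ) (z : ℤ), ¬ (p : ℤ) ∣ z → IsCoprime ((p : ℤ) ^ t) z := by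
    intro t z hz
    exact IsCoprime.pow_left ((hpz.coprime_iff_not_dvd).mpr hz)
  have ha0 : 0 < a := Nat.pos_of_ne_zero (by rintro rfl; exact ha (dvd_zero p))
  have hb0 : 0 < b := Nat.pos_of_ne_zero (by rintro rfl; exact hb (dvd_zero p))
  have hm0 : 0 < m := by rw [hm]; positivity
  have hl0 : 0 < l := by rw [hl]; positivity
  have hnb : ¬ (p : ℤ) ∣ (b : ℤ) := fun h => hb (by exact_mod_cast h)
  have hpm1 : (p : ℤ) ∣ (m : ℤ) := by
    rw [hm]; push_cast
    exact dvd_mul_of_dvd_left (dvd_pow_self (p : ℤ) (by omega)) _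
  by_cases hβ : β = 0
  · -- case β = 0
    subst hβ
    rw [if_pos rfl, sub_zero]
    simp only [pow_zero, one_mul] at hl
    obtain ⟨l0, hl0'⟩ : ∃ l0, l = l0 + 1 := ⟨l - 1, by omega⟩
    obtain ⟨m0, hm0'⟩ : ∃ m0, m = m0 + 1 := ⟨m - 1, by omega⟩
    have hpm : (p : ℤ) ^ α ∣ (m : ℤ) := ⟨(a : ℤ), by rw [hm]; push_cast; ring⟩
    have hnl : ¬ (p : ℤ) ∣ (l : ℤ) := by rw [hl]; exact hnb
    have hX1 : (p : ℤ) ^ α ∣ ichoose (m : ℤ) l := by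
      have hd : (p : ℤ) ^ α ∣ ichoose (m : ℤ) l * (l : ℤ) := by
        rw [hl0']; push_cast
        rw [ichoose_succ_mul' (m : ℤ) l0]
        exact hpm.mul_right _
      exact (hcop α (l : ℤ) hnl).dvd_of_dvd_mul_right hd
    have hnN : ¬ (p : ℤ) ∣ ((m : ℤ) * τ + l) := by
      intro h
      have h2 : (p : ℤ) ∣ (l : ℤ) := by
        have := dvd_sub h (hpm1.mul_right τ)
        simpa using this
      exact hnl h2
    have hX2 : (p : ℤ) ^ α ∣ ichoose ((m : ℤ) * τ + l - 1) (m - 1) := by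
      have hd : (p : ℤ) ^ α ∣ ((m : ℤ) * τ + l) * ichoose ((m : ℤ) * τ + l - 1) (m - 1) := by
        rw [show m - 1 = m0 from by omega, ← ichoose_succ_mul' ((m : ℤ) * τ + l) m0]
        have hpm' : (p : ℤ) ^ α ∣ ((m0 : ℤ) + 1) := by
          have : ((m0 : ℤ) + 1) = (m : ℤ) := by rw [hm0']; push_cast; ring
          rw [this]; exact hpm
        exact hpm'.mul_left _
      exact (hcop α _ hnN).dvd_of_dvd_mul_left hd
    rw [two_mul, pow_add]
    exact mul_dvd_mul hX1 hX2
  · -- case β ≥ 1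
    have hβ1 : 1 ≤ β := by omega
    set γ := min α β with hγdef
    have hγ1 : 1 ≤ γ := by omega
    have hγα : γ ≤ α := min_le_left _ _
    have hγβ : γ ≤ β := min_le_right _ _
    set m' : ℕ := p ^ (α - 1) * a with hm'def
    set l' : ℕ := p ^ (β - 1) * b with hl'def
    have hm' : m = p * m' := by
      have e : p ^ (α - 1) * p = p ^ α := by
        rw [← pow_succ, Nat.sub_add_cancel hα]
      rw [hm, hm'def, ← e]; ring
    have hl' : l = p * l' := by
      have e : p ^ (β - 1) * p = p ^ β := by
        rw [← pow_succ, Nat.sub_add_cancel hβ1]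
      rw [hl, hl'def, ← e]; ring
    have hm'0 : 0 < m' := by rw [hm'def]; positivity
    have hl'0 : 0 < l' := by rw [hl'def]; positivity
    have hmdiv : m / p = m' := by rw [hm', Nat.mul_div_cancel_left _ hp0]
    have hldiv : l / p = l' := by rw [hl', Nat.mul_div_cancel_left _ hp0]
    set M : ℤ := (m' : ℤ) * τ + (l' : ℤ) with hMdef
    have hNM : (m : ℤ) * τ + (l : ℤ) = (p : ℤ) * M := by
      rw [hm', hl', hMdef]; push_cast; ring
    rw [if_neg hβ, hmdiv, hldiv, hNM,
      Int.mul_ediv_cancel_left _ (show (p : ℤ) ≠ 0 from by exact_mod_cast hp0.ne')]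
    -- divisibility facts
    have hpml : p ∣ l := ⟨l', hl'⟩
    have hpmm : p ∣ m := ⟨m', hm'⟩
    have hγm : (p : ℤ) ^ γ ∣ (m : ℤ) := by
      refine ⟨(p : ℤ) ^ (α - γ) * a, ?_⟩
      rw [hm]; push_cast
      rw [← mul_assoc, ← pow_add, show γ + (α - γ) = α from by omega]
    have hγl : (p : ℤ) ^ γ ∣ (l : ℤ) := by
      refine ⟨(p : ℤ) ^ (β - γ) * b, ?_⟩
      rw [hl]; push_cast
      rw [← mul_assoc, ← pow_add, show γ + (β - γ) = β from by omega]
    have hγN : (p : ℤ) ^ γ ∣ (p : ℤ) * M := by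
      rw [← hNM]; exact dvd_add (hγm.mul_right τ) hγl
    -- sets and products
    set Tl := (Icc 1 l).filter (fun j => ¬ p ∣ j) with hTldef
    set Tm := (Icc 1 (m - 1)).filter (fun j => ¬ p ∣ j) with hTmdef
    have hTmeq : Tm = (Icc 1 m).filter (fun j => ¬ p ∣ j) :=
      filter_Icc_pred p m hpmm hm0
    set Pl := ∏ j ∈ Tl, (j : ℤ) with hPldef
    set Ql := ∏ j ∈ Tl, ((m : ℤ) - l + j) with hQldef
    set Pm := ∏ j ∈ Tm, (j : ℤ) with hPmdef
    set Qm := ∏ j ∈ Tm, ((p : ℤ) * M - m + j) with hQmdef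
    -- (a)
    have hA : ichoose (m : ℤ) l * Pl = ichoose (m' : ℤ) l' * Ql := by
      apply key_ratio p hp0 l l' hldiv _ (fun j => (m' : ℤ) - l' + j)
      · intro j; rw [hm', hl']; push_cast; ring
      · rw [ichoose_prod, prod_range_eq_Icc]
      · rw [ichoose_prod, prod_range_eq_Icc]
    -- (b)
    have hmm : m' * p = m := by rw [hm']; ring
    have hdiv2 : (m - 1) / p = m' - 1 := by
      apply Nat.div_eq_of_lt_le
      · rw [Nat.sub_mul, hmm]; omega
      · rw [show m' - 1 + 1 = m' from by omega, hmm]; omega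
    have hB : ichoose ((p : ℤ) * M - 1) (m - 1) * Pm = ichoose (M - 1) (m' - 1) * Qm := by
      apply key_ratio p hp0 (m - 1) (m' - 1) hdiv2 _ (fun j => M - (m' : ℤ) + j)
      · intro j; rw [hm']; push_cast; ring
      · rw [ichoose_prod, prod_range_eq_Icc]
        apply Finset.prod_congr rfl
        intro j _
        have : ((m - 1 : ℕ) : ℤ) = (m : ℤ) - 1 := by omega
        rw [this]; ring
      · rw [ichoose_prod, prod_range_eq_Icc]
        apply Finset.prod_congr rfl
        intro j _
        have : ((m' - 1 : ℕ) : ℤ) = (m' : ℤ) - 1 := by omega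
        rw [this]; ring
    -- involution forms
    have hQl' : Ql = ∏ j ∈ Tl, ((m : ℤ) - j) := by
      rw [hQldef, hTldef, prod_invol p l hpml hl0]
      apply Finset.prod_congr rfl
      intro j hj
      simp only [Finset.mem_filter, Finset.mem_Icc] at hj
      have : ((l - j : ℕ) : ℤ) = (l : ℤ) - j := by omega
      rw [this]; ring
    have hPl' : Pl = ∏ j ∈ Tl, ((l : ℤ) - j) := by
      rw [hPldef, hTldef, prod_invol p l hpml hl0]
      apply Finset.prod_congr rfl
      intro j hj
      simp only [Finset.mem_filter, Finset.mem_Icc] at hj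
      omega
    have hQm' : Qm = ∏ j ∈ Tm, ((p : ℤ) * M - j) := by
      rw [hQmdef, hTmeq, prod_invol p m hpmm hm0]
      apply Finset.prod_congr rfl
      intro j hj
      simp only [Finset.mem_filter, Finset.mem_Icc] at hj
      have : ((m - j : ℕ) : ℤ) = (m : ℤ) - j := by omega
      rw [this]; ring
    have hPm' : Pm = ∏ j ∈ Tm, ((m : ℤ) - j) := by
      rw [hPmdef, hTmeq, prod_invol p m hpmm hm0]
      apply Finset.prod_congr rfl
      intro j hj
      simp only [Finset.mem_filter, Finset.mem_Icc] at hj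
      omega
    -- squared congruences
    have hd1 : (p : ℤ) ^ (2 * γ) ∣ Ql * Ql - Pl * Pl := by
      nth_rewrite 2 [hQl']
      nth_rewrite 2 [hPl']
      rw [hQldef, hPldef, ← Finset.prod_mul_distrib, ← Finset.prod_mul_distrib]
      apply prod_congr_dvd
      intro j hj
      have heq : ((m : ℤ) - l + j) * ((m : ℤ) - j) - (j : ℤ) * ((l : ℤ) - j)
          = (m : ℤ) * ((m : ℤ) - l) := by ring
      rw [heq, two_mul, pow_add]
      exact mul_dvd_mul hγm (dvd_sub hγm hγl)
    have hd2 : (p : ℤ) ^ (2 * γ) ∣ Qm * Qm - Pm * Pm := by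
      nth_rewrite 2 [hQm']
      nth_rewrite 2 [hPm']
      rw [hQmdef, hPmdef, ← Finset.prod_mul_distrib, ← Finset.prod_mul_distrib]
      apply prod_congr_dvd
      intro j hj
      have heq : ((p : ℤ) * M - m + j) * ((p : ℤ) * M - j) - (j : ℤ) * ((m : ℤ) - j)
          = ((p : ℤ) * M) * ((p : ℤ) * M - m) := by ring
      rw [heq, two_mul, pow_add]
      exact mul_dvd_mul hγN (dvd_sub hγN hγm)
    -- mod p congruence
    have hd3 : (p : ℤ) ∣ Ql * Qm - Pl * Pm := by
      have e1 : (p : ℤ) ∣ Ql - Pl := by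
        rw [hQldef, hPldef]
        apply prod_congr_dvd
        intro j hj
        have heq : ((m : ℤ) - l + j) - (j : ℤ) = (m : ℤ) - l := by ring
        rw [heq]
        exact dvd_sub hpm1 (dvd_trans (dvd_pow_self _ (by omega : γ ≠ 0)) hγl)
      have e2 : (p : ℤ) ∣ Qm - Pm := by
        rw [hQmdef, hPmdef]
        apply prod_congr_dvd
        intro j hj
        have heq : ((p : ℤ) * M - m + j) - (j : ℤ) = (p : ℤ) * M - m := by ring
        rw [heq]
        exact dvd_sub (Dvd.intro M rfl) hpm1
      have heq : Ql * Qm - Pl * Pm = Ql * (Qm - Pm) + Pm * (Ql - Pl) := by ring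
      rw [heq]
      exact dvd_add (e2.mul_left _) (e1.mul_left _)
    have hd4 : ¬ (p : ℤ) ∣ Pl * Pm := by
      intro h
      rcases (Prime.dvd_mul hpz).mp h with h | h
      · rw [hPldef] at h
        obtain ⟨j, hj, hdj⟩ := (Prime.dvd_finset_prod_iff hpz _).mp h
        rw [hTldef] at hj
        simp only [Finset.mem_filter, Finset.mem_Icc] at hj
        exact hj.2 (by exact_mod_cast hdj)
      · rw [hPmdef] at h
        obtain ⟨j, hj, hdj⟩ := (Prime.dvd_finset_prod_iff hpz _).mp h
        rw [hTmdef] at hj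
        simp only [Finset.mem_filter, Finset.mem_Icc] at hj
        exact hj.2 (by exact_mod_cast hdj)
    have hd5 : ¬ (p : ℤ) ∣ Ql * Qm + Pl * Pm := by
      intro h
      have h2 : (p : ℤ) ∣ 2 * (Pl * Pm) := by
        have := dvd_sub h hd3
        simpa [two_mul] using this
      rcases (Prime.dvd_mul hpz).mp h2 with h | h
      · have hle := Int.le_of_dvd (by norm_num) h
        obtain ⟨t, ht⟩ := hodd
        have : (p : ℤ) = 2 * t + 1 := by exact_mod_cast ht
        omega
      · exact hd4 h
    have hUV : (p : ℤ) ^ (2 * γ) ∣ Ql * Qm - Pl * Pm := by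
      have hsq : (p : ℤ) ^ (2 * γ) ∣ (Ql * Qm - Pl * Pm) * (Ql * Qm + Pl * Pm) := by
        have heq : (Ql * Qm - Pl * Pm) * (Ql * Qm + Pl * Pm)
            = Ql * Ql * (Qm * Qm - Pm * Pm) + Pm * Pm * (Ql * Ql - Pl * Pl) := by ring
        rw [heq]
        exact dvd_add (hd2.mul_left _) (hd1.mul_left _)
      exact (hcop (2 * γ) _ hd5).dvd_of_dvd_mul_right hsq
    -- the small binomials divisibility
    have hYY : (p : ℤ) ^ (2 * (α - γ)) ∣ ichoose (m' : ℤ) l' * ichoose (M - 1) (m' - 1) := by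
      by_cases hba : α ≤ β
      · rw [show 2 * (α - γ) = 0 from by omega, pow_zero]
        exact one_dvd _
      · have hβα : β < α := by omega
        have hγβ' : γ = β := by omega
        have hpm' : (p : ℤ) ^ (α - 1) ∣ (m' : ℤ) := ⟨(a : ℤ), by rw [hm'def]; push_cast; ring⟩
        have hY1 : (p : ℤ) ^ (α - β) ∣ ichoose (m' : ℤ) l' := by
          obtain ⟨l'0, hl'0'⟩ : ∃ t, l' = t + 1 := ⟨l' - 1, by omega⟩
          have hd : (p : ℤ) ^ (α - 1) ∣ ichoose (m' : ℤ) l' * (l' : ℤ) := by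
            rw [hl'0']; push_cast
            rw [ichoose_succ_mul' (m' : ℤ) l'0]
            exact hpm'.mul_right _
          have heq : ichoose (m' : ℤ) l' * (l' : ℤ)
              = (p : ℤ) ^ (β - 1) * (ichoose (m' : ℤ) l' * b) := by
            rw [hl'def]; push_cast; ring
          rw [heq, show α - 1 = (β - 1) + (α - β) from by omega, pow_add] at hd
          have hd' : (p : ℤ) ^ (α - β) ∣ ichoose (m' : ℤ) l' * (b : ℤ) :=
            (mul_dvd_mul_iff_left (pow_ne_zero (β - 1)
              (show (p : ℤ) ≠ 0 from by exact_mod_cast hp0.ne'))).mp hd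
          exact (hcop _ _ hnb).dvd_of_dvd_mul_right hd'
        have hY2 : (p : ℤ) ^ (α - β) ∣ ichoose (M - 1) (m' - 1) := by
          obtain ⟨m'0, hm'0'⟩ : ∃ t, m' = t + 1 := ⟨m' - 1, by omega⟩
          have hd : (p : ℤ) ^ (α - 1) ∣ M * ichoose (M - 1) (m' - 1) := by
            rw [show m' - 1 = m'0 from by omega, ← ichoose_succ_mul' M m'0]
            have : (p : ℤ) ^ (α - 1) ∣ ((m'0 : ℤ) + 1) := by
              have he : ((m'0 : ℤ) + 1) = (m' : ℤ) := by rw [hm'0']; push_cast; ring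
              rw [he]; exact hpm'
            exact this.mul_left _
          set M2 : ℤ := (p : ℤ) ^ (α - β) * a * τ + b with hM2def
          have hM2 : M = (p : ℤ) ^ (β - 1) * M2 := by
            rw [hMdef, hm'def, hl'def, hM2def]; push_cast
            rw [show α - 1 = (β - 1) + (α - β) from by omega, pow_add]; ring
          have hnM2 : ¬ (p : ℤ) ∣ M2 := by
            intro h
            have h2 : (p : ℤ) ∣ (b : ℤ) := by
              have hd2' : (p : ℤ) ∣ (p : ℤ) ^ (α - β) * a * τ :=
                dvd_mul_of_dvd_left
                  (dvd_mul_of_dvd_left (dvd_pow_self (p : ℤ) (by omega : α - β ≠ 0)) _) _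
              have := dvd_sub h hd2'
              rw [hM2def] at this
              simpa using this
            exact hnb h2
          have hd2 : (p : ℤ) ^ (β - 1) * (p : ℤ) ^ (α - β)
              ∣ (p : ℤ) ^ (β - 1) * (M2 * ichoose (M - 1) (m' - 1)) := by
            rw [← pow_add, show (β - 1) + (α - β) = α - 1 from by omega, ← mul_assoc, ← hM2]
            exact hd
          have hd' : (p : ℤ) ^ (α - β) ∣ M2 * ichoose (M - 1) (m' - 1) :=
            (mul_dvd_mul_iff_left (pow_ne_zero (β - 1)
              (show (p : ℤ) ≠ 0 from by exact_mod_cast hp0.ne'))).mp hd2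
          exact (hcop _ _ hnM2).dvd_of_dvd_mul_left hd'
        rw [show 2 * (α - γ) = (α - β) + (α - β) from by omega, pow_add]
        exact mul_dvd_mul hY1 hY2
    -- assemble
    have hkey : Pl * Pm * (ichoose (m : ℤ) l * ichoose ((p : ℤ) * M - 1) (m - 1)
          - ichoose (m' : ℤ) l' * ichoose (M - 1) (m' - 1))
        = ichoose (m' : ℤ) l' * ichoose (M - 1) (m' - 1) * (Ql * Qm - Pl * Pm) := by
      linear_combination (ichoose ((p : ℤ) * M - 1) (m - 1) * Pm) * hA
        + (ichoose (m' : ℤ) l' * Ql) * hB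
    have h6 : (p : ℤ) ^ (2 * α) ∣ ichoose (m' : ℤ) l' * ichoose (M - 1) (m' - 1)
        * (Ql * Qm - Pl * Pm) := by
      rw [show 2 * α = 2 * (α - γ) + 2 * γ from by omega, pow_add]
      exact mul_dvd_mul hYY hUV
    rw [← hkey] at h6
    exact (hcop (2 * α) _ hd4).dvd_of_dvd_mul_left h6
end

section
/- Let p be a prime, τ an integer, and let a, b be positive integers with p^β exactly dividing both gcd(a,b) and p^α dividing a+b (β ≤ α). Then p^{α-β} divides C(aτ+a-1, a) · C(bτ+b, b). -/
open Finset

lemma mod_pred_aux (P n : ℕ) (h : n % P ≠ 0) : (n - 1) % P = n % P - 1 := by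
  rcases Nat.eq_zero_or_pos P with rfl | hP
  · simp
  have hd := Nat.div_add_mod n P
  have hlt : n % P < P := Nat.mod_lt _ hP
  have h1 : n - 1 = P * (n / P) + (n % P - 1) := by omega
  rw [h1, Nat.mul_add_mod, Nat.mod_eq_of_lt (by omega)]

lemma sum_mod_eq (P x y : ℕ) (hP : 0 < P) (hx : x % P ≠ 0) (hy : y % P ≠ 0)
    (h : P ∣ x + y) : x % P + y % P = P := by
  have hm : P ∣ x % P + y % P := by
    apply Nat.dvd_of_mod_eq_zero
    rw [← Nat.add_mod]
    exact Nat.mod_eq_zero_of_dvd h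
  have hx' : x % P < P := Nat.mod_lt _ hP
  have hy' : y % P < P := Nat.mod_lt _ hP
  obtain ⟨c, hc⟩ := hm
  have hc2 : c = 1 := by
    rcases c with _ | _ | c
    · omega
    · rfl
    · exfalso; nlinarith
  subst hc2; omega

theorem key (p : ℕ) (hp : p.Prime) (a b s α β : ℕ) (ha : 1 ≤ a) (hb : 1 ≤ b) (hs : 2 ≤ s)
    (hβ : β ≤ α) (h2 : ¬ p ^ (β + 1) ∣ Nat.gcd a b) (h3 : p ^ α ∣ a + b) :
    p ^ (α - β) ∣ (a * s - 1).choose a * (b * s).choose b := by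
  have haa : a ≤ a * s - 1 := by
    have := Nat.mul_le_mul_left a hs; omega
  have hbb : b ≤ b * s := Nat.le_mul_of_pos_right b (by omega)
  set B : ℕ := Nat.log p (a * s - 1) + Nat.log p (b * s) + α + 2 with hB
  have hB1 : Nat.log p (a * s - 1) < B := by omega
  have hB2 : Nat.log p (b * s) < B := by omega
  rw [pow_dvd_iff_le_emultiplicity, emultiplicity_mul hp.prime,
    hp.emultiplicity_choose haa hB1, hp.emultiplicity_choose hbb hB2]
  rw [← Nat.cast_add, Nat.cast_le]
  set S1 := {i ∈ Ico 1 B | p ^ i ≤ a % p ^ i + (a * s - 1 - a) % p ^ i} with hS1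
  set S2 := {i ∈ Ico 1 B | p ^ i ≤ b % p ^ i + (b * s - b) % p ^ i} with hS2
  have hsub : Finset.Ico (β + 1) (α + 1) ⊆ S1 ∪ S2 := by
    intro i hi
    rw [Finset.mem_Ico] at hi
    have hiIco : i ∈ Ico 1 B := by rw [Finset.mem_Ico]; omega
    set P := p ^ i with hPdef
    have hPpos : 0 < P := pow_pos hp.pos i
    have hPab : P ∣ a + b := dvd_trans (pow_dvd_pow p (by omega : i ≤ α)) h3
    have hA : a % P ≠ 0 := by
      intro h0
      have hPa : P ∣ a := Nat.dvd_of_mod_eq_zero h0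
      have hPb : P ∣ b := (Nat.dvd_add_right hPa).mp hPab
      exact h2 (dvd_trans (pow_dvd_pow p (by omega : β + 1 ≤ i))
        (Nat.dvd_gcd hPa hPb))
    have hBm : b % P ≠ 0 := by
      intro h0
      have hPb : P ∣ b := Nat.dvd_of_mod_eq_zero h0
      have hPa : P ∣ a := (Nat.dvd_add_left hPb).mp hPab
      exact h2 (dvd_trans (pow_dvd_pow p (by omega : β + 1 ≤ i))
        (Nat.dvd_gcd hPa hPb))
    have hab : a % P + b % P = P := sum_mod_eq P a b hPpos hA hBm hPab
    rw [Finset.mem_union]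
    by_cases hC : P ≤ b % P + (b * s - b) % P
    · right; rw [hS2, Finset.mem_filter]; exact ⟨hiIco, hC⟩
    · left; rw [hS1, Finset.mem_filter]
      refine ⟨hiIco, ?_⟩
      push_neg at hC
      have hbsum : b + (b * s - b) = b * s := by omega
      have h6 : (b * s) % P = b % P + (b * s - b) % P := by
        rw [← hbsum, Nat.add_mod, Nat.mod_eq_of_lt hC, Nat.add_sub_cancel_left]
      have hsP : P ∣ a * s + b * s := by
        have he : a * s + b * s = (a + b) * s := (add_mul a b s).symm
        rw [he]; exact hPab.mul_right s
      have hbs0 : (b * s) % P ≠ 0 := by omega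
      have has0 : (a * s) % P ≠ 0 := by
        intro h0
        have hPas : P ∣ a * s := Nat.dvd_of_mod_eq_zero h0
        have hPbs : P ∣ b * s := (Nat.dvd_add_right hPas).mp hsP
        exact hbs0 (Nat.mod_eq_zero_of_dvd hPbs)
      have habs : (a * s) % P + (b * s) % P = P :=
        sum_mod_eq P (a * s) (b * s) hPpos has0 hbs0 hsP
      have hpred : (a * s - 1) % P = (a * s) % P - 1 := mod_pred_aux P (a * s) has0
      by_contra hG
      push_neg at hG
      have hasum : a + (a * s - 1 - a) = a * s - 1 := by omega
      have h7 : (a * s - 1) % P = a % P + (a * s - 1 - a) % P := by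
        rw [← hasum, Nat.add_mod, Nat.mod_eq_of_lt hG, Nat.add_sub_cancel_left]
      omega
  have hcard : α - β ≤ S1.card + S2.card := by
    calc α - β = (Finset.Ico (β + 1) (α + 1)).card := by rw [Nat.card_Ico]; omega
      _ ≤ (S1 ∪ S2).card := Finset.card_le_card hsub
      _ ≤ S1.card + S2.card := Finset.card_union_le _ _
  exact hcard

theorem stmt7 (p : ℕ) (hp : p.Prime) (τ : ℤ) (a b : ℕ) (ha : 1 ≤ a) (hb : 1 ≤ b)
    (α β : ℕ) (hβ : β ≤ α)
    (h1 : p ^ β ∣ Nat.gcd a b) (h2 : ¬ p ^ (β + 1) ∣ Nat.gcd a b)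
    (h3 : p ^ α ∣ a + b) :
    ((p : ℤ) ^ (α - β)) ∣
      ichoose ((a : ℤ) * τ + a - 1) a * ichoose ((b : ℤ) * τ + b) b := by
  obtain hτ | hτ | hτ | hτ : 1 ≤ τ ∨ τ = 0 ∨ τ = -1 ∨ τ ≤ -2 := by omega
  · -- τ ≥ 1 : s = τ + 1 ≥ 2
    set s : ℕ := τ.toNat + 1 with hsdef
    have hsτ : (s : ℤ) = τ + 1 := by
      push_cast [hsdef]
      rw [Int.toNat_of_nonneg (by omega)]
    have hs2 : 2 ≤ s := by
      have : 1 ≤ τ.toNat := by omega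
      omega
    have h1a : 1 ≤ a * s := Nat.one_le_iff_ne_zero.mpr (by positivity)
    have e1 : (a : ℤ) * τ + a - 1 = ((a * s - 1 : ℕ) : ℤ) := by
      rw [Nat.cast_sub h1a]; push_cast [hsτ]; ring
    have e2 : (b : ℤ) * τ + b = ((b * s : ℕ) : ℤ) := by push_cast [hsτ]; ring
    rw [e1, e2]
    rw [ichoose, if_pos (Int.natCast_nonneg _), ichoose, if_pos (Int.natCast_nonneg _),
      Int.toNat_natCast, Int.toNat_natCast]
    exact_mod_cast key p hp a b s α β ha hb hs2 hβ h2 h3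
  · -- τ = 0 : first factor C(a-1, a) = 0
    subst hτ
    have e1 : (a : ℤ) * 0 + a - 1 = ((a - 1 : ℕ) : ℤ) := by
      rw [Nat.cast_sub ha]; push_cast; ring
    rw [e1, ichoose, if_pos (Int.natCast_nonneg _), Int.toNat_natCast,
      Nat.choose_eq_zero_of_lt (by omega)]
    simp
  · -- τ = -1 : second factor C(0, b) = 0
    subst hτ
    have e2 : (b : ℤ) * (-1) + b = ((0 : ℕ) : ℤ) := by push_cast; ring
    have hz : ichoose ((b : ℤ) * (-1) + b) b = 0 := by
      rw [e2, ichoose, if_pos (Int.natCast_nonneg _), Int.toNat_natCast,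
        Nat.choose_eq_zero_of_lt (by omega)]
      simp
    rw [hz, mul_zero]
    exact dvd_zero _
  · -- τ ≤ -2 : t = -τ ≥ 2
    set t : ℕ := (-τ).toNat with htdef
    have htτ : (t : ℤ) = -τ := by rw [htdef, Int.toNat_of_nonneg (by omega)]
    have ht2 : 2 ≤ t := by omega
    have hbt : 1 ≤ b * t := Nat.one_le_iff_ne_zero.mpr (by positivity)
    have hn1 : ¬ (0 : ℤ) ≤ (a : ℤ) * τ + a - 1 := by
      have h1' : (a : ℤ) * τ ≤ (a : ℤ) * (-2) :=
        mul_le_mul_of_nonneg_left hτ (by positivity)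
      have h2' : (1 : ℤ) ≤ (a : ℤ) := by exact_mod_cast ha
      nlinarith
    have hn2 : ¬ (0 : ℤ) ≤ (b : ℤ) * τ + b := by
      have h1' : (b : ℤ) * τ ≤ (b : ℤ) * (-2) :=
        mul_le_mul_of_nonneg_left hτ (by positivity)
      have h2' : (1 : ℤ) ≤ (b : ℤ) := by exact_mod_cast hb
      nlinarith
    have e1 : -((a : ℤ) * τ + a - 1) + a - 1 = ((a * t : ℕ) : ℤ) := by
      push_cast [htτ]; ring
    have e2 : -((b : ℤ) * τ + b) + b - 1 = ((b * t - 1 : ℕ) : ℤ) := by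
      rw [Nat.cast_sub hbt]; push_cast [htτ]; ring
    rw [ichoose, if_neg hn1, ichoose, if_neg hn2, e1, e2, Int.toNat_natCast,
      Int.toNat_natCast]
    have hd : ((p : ℤ)) ^ (α - β) ∣ (((b * t - 1).choose b * (a * t).choose a : ℕ) : ℤ) := by
      have h2' : ¬ p ^ (β + 1) ∣ Nat.gcd b a := by rwa [Nat.gcd_comm]
      have h3' : p ^ α ∣ b + a := by rwa [add_comm]
      exact_mod_cast key p hp b a t α β hb ha ht2 hβ h2' h3'
    push_cast at hd
    have hre : (-1 : ℤ) ^ a * ((a * t).choose a : ℤ) * ((-1) ^ b * ((b * t - 1).choose b : ℤ))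
        = ((-1) ^ a * (-1) ^ b) * (((b * t - 1).choose b : ℤ) * ((a * t).choose a : ℤ)) := by
      ring
    rw [hre]
    exact hd.mul_left _
end

section
/- For the functional equation Y = X(1-Y)^τ(1-a(1-Y)) with Y(0)=0, the formal power series solution satisfies log(1 - Y(X)) = Σ_{n≥1} (X^n/n) Σ_{i≥0} (-1)^{n+i} C(n,i) C(nτ+i-1, n-1) a^i, as formal power series in X with coefficients polynomials in a (and τ an integer). -/
open PowerSeries Finset

/-- The formal logarithm `log F = Σ_{k≥1} (-1)^{k+1} (F-1)^k / k` of a power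
series `F` (with constant term 1). -/
noncomputable def plog (F : PowerSeries (Polynomial ℚ)) : PowerSeries (Polynomial ℚ) :=
  PowerSeries.mk fun n =>
    ∑ k ∈ Finset.range (n + 1),
      Polynomial.C ((-1 : ℚ) ^ (k + 1) / k) * PowerSeries.coeff (R := Polynomial ℚ) n ((F - 1) ^ k)

namespace Stmt11Aux

variable {K : Type*} [Field K]

/-- Composition of power series `P ∘ Y` (sensible when `Y` has zero constant term). -/
noncomputable def pcomp (P Y : K⟦X⟧) : K⟦X⟧ :=
  PowerSeries.mk fun n => coeff (R := K) n ((P.trunc (n+1)).eval₂ (C (R := K)) Y)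

lemma coeff_pow_eq_zero {Y U : K⟦X⟧} (hXU : Y = X * U) {n j : ℕ} (h : n < j) :
    coeff (R := K) n (Y ^ j) = 0 := by
  rw [hXU, mul_pow, coeff_X_pow_mul', if_neg (not_le.2 h)]

lemma coeff_eval₂_eq_zero {Y U : K⟦X⟧} (hXU : Y = X * U) {n : ℕ} {f : Polynomial K}
    (hf : ∀ j, j ≤ n → f.coeff j = 0) : coeff (R := K) n (f.eval₂ (C (R := K)) Y) = 0 := by
  rw [Polynomial.eval₂_eq_sum_range, map_sum]
  refine Finset.sum_eq_zero fun i _ => ?_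
  rcases le_or_gt i n with hi | hi
  · rw [hf i hi, map_zero, zero_mul, map_zero]
  · rw [coeff_mul, Finset.sum_eq_zero]
    intro p hp
    have hp' := Finset.HasAntidiagonal.mem_antidiagonal.1 hp
    exact mul_eq_zero_of_right _ (coeff_pow_eq_zero hXU (by omega))

lemma coeff_eval₂_congr {Y U : K⟦X⟧} (hXU : Y = X * U) {n : ℕ} {f g : Polynomial K}
    (h : ∀ j, j ≤ n → f.coeff j = g.coeff j) :
    coeff (R := K) n (f.eval₂ (C (R := K)) Y) = coeff (R := K) n (g.eval₂ (C (R := K)) Y) := by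
  have : coeff (R := K) n ((f - g).eval₂ (C (R := K)) Y) = 0 :=
    coeff_eval₂_eq_zero hXU (fun j hj => by rw [Polynomial.coeff_sub, h j hj, sub_self])
  rw [Polynomial.eval₂_sub, map_sub] at this
  exact sub_eq_zero.mp this

lemma coeff_pcomp {P Y U : K⟦X⟧} (hXU : Y = X * U) {n N : ℕ} (h : n < N) :
    coeff (R := K) n (pcomp P Y) = coeff (R := K) n ((P.trunc N).eval₂ (C (R := K)) Y) := by
  rw [pcomp, coeff_mk]
  refine coeff_eval₂_congr hXU fun j hj => ?_
  rw [coeff_trunc, coeff_trunc, if_pos (by omega), if_pos (by omega)]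

lemma pcomp_mul {Y U : K⟦X⟧} (hXU : Y = X * U) (P Q : K⟦X⟧) :
    pcomp (P * Q) Y = pcomp P Y * pcomp Q Y := by
  ext n
  rw [coeff_pcomp hXU (Nat.lt_succ_self n), ← trunc_trunc_mul_trunc]
  have step1 : coeff (R := K) n ((PowerSeries.trunc (n+1) (↑(trunc (n+1) P) * ↑(trunc (n+1) Q) : K⟦X⟧)).eval₂ (C (R := K)) Y)
      = coeff (R := K) n ((trunc (n+1) P * trunc (n+1) Q).eval₂ (C (R := K)) Y) := by
    refine coeff_eval₂_congr hXU fun j hj => ?_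
    rw [coeff_trunc, if_pos (by omega), ← Polynomial.coeff_coe, Polynomial.coe_mul]
  rw [step1, Polynomial.eval₂_mul, coeff_mul, coeff_mul]
  refine Finset.sum_congr rfl fun p hp => ?_
  have hp' := Finset.HasAntidiagonal.mem_antidiagonal.1 hp
  rw [coeff_pcomp hXU (show p.1 < n+1 by omega), coeff_pcomp hXU (show p.2 < n+1 by omega)]


lemma pcomp_C {Y U : K⟦X⟧} (hXU : Y = X * U) (r : K) : pcomp (C (R := K) r) Y = C (R := K) r := by
  ext n
  rw [coeff_pcomp hXU (Nat.lt_succ_self n), trunc_C, Polynomial.eval₂_C]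

lemma pcomp_one {Y U : K⟦X⟧} (hXU : Y = X * U) : pcomp 1 Y = 1 := by
  have := pcomp_C hXU 1; rwa [map_one] at this

lemma pcomp_X {Y U : K⟦X⟧} (hXU : Y = X * U) : pcomp X Y = Y := by
  ext n
  rcases n with _ | n
  · rw [coeff_pcomp hXU (show 0 < 1 by norm_num)]
    have : PowerSeries.trunc 1 (X : K⟦X⟧) = 0 := by
      apply Polynomial.ext
      intro j
      rw [coeff_trunc]
      split_ifs with h
      · interval_cases j
        simp
      · simp
    rw [this, Polynomial.eval₂_zero, map_zero, hXU]
    simp [coeff_mul]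
  · rw [coeff_pcomp hXU (show n + 1 < n + 2 by omega), trunc_X_of (by omega),
      Polynomial.eval₂_X]

lemma pcomp_neg {Y U : K⟦X⟧} (hXU : Y = X * U) (P : K⟦X⟧) : pcomp (-P) Y = - pcomp P Y := by
  ext n
  have htr : PowerSeries.trunc (n+1) (-P) = - PowerSeries.trunc (n+1) P := by
    apply Polynomial.ext
    intro j
    rw [Polynomial.coeff_neg, coeff_trunc, coeff_trunc]
    split_ifs <;> simp
  rw [pcomp, pcomp, map_neg, coeff_mk, coeff_mk, htr, Polynomial.eval₂_neg, map_neg]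

lemma pcomp_add {Y U : K⟦X⟧} (hXU : Y = X * U) (P Q : K⟦X⟧) :
    pcomp (P + Q) Y = pcomp P Y + pcomp Q Y := by
  ext n
  rw [pcomp, pcomp, pcomp, coeff_mk, map_add (coeff (R := K) n), coeff_mk, coeff_mk, map_add,
    Polynomial.eval₂_add, map_add]

lemma pcomp_sub {Y U : K⟦X⟧} (hXU : Y = X * U) (P Q : K⟦X⟧) :
    pcomp (P - Q) Y = pcomp P Y - pcomp Q Y := by
  rw [sub_eq_add_neg, pcomp_add hXU, pcomp_neg hXU, sub_eq_add_neg]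

lemma pcomp_pow {Y U : K⟦X⟧} (hXU : Y = X * U) (P : K⟦X⟧) (k : ℕ) :
    pcomp (P ^ k) Y = (pcomp P Y) ^ k := by
  induction k with
  | zero => simpa using pcomp_one hXU
  | succ k ih => rw [pow_succ, pow_succ, pcomp_mul hXU, ih]

lemma dX : (X : K⟦X⟧).derivativeFun = 1 := by
  ext n
  erw [coeff_derivativeFun]
  rcases n with _ | n <;> simp [coeff_X]

lemma dpow (F : K⟦X⟧) (j : ℕ) :
    (F ^ (j+1)).derivativeFun = C (R := K) ((j+1 : ℕ) : K) * (F ^ j * F.derivativeFun) := by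
  induction j with
  | zero => simp
  | succ j ih =>
    rw [pow_succ, derivativeFun_mul, ih, smul_eq_mul, smul_eq_mul,
      show ((j+1+1 : ℕ) : K) = ((j+1 : ℕ) : K) + 1 by push_cast; ring, map_add, map_one]
    ring

lemma powUV {U V : K⟦X⟧} (hUV : U * V = 1) (a : ℕ) : U ^ a * V ^ a = 1 := by
  rw [← mul_pow, hUV, one_pow]

lemma hDUV {U V : K⟦X⟧} (hUV : U * V = 1) :
    U.derivativeFun * V = -(U * V.derivativeFun) := by
  have h := congrArg derivativeFun hUV
  rw [derivativeFun_mul, derivativeFun_one, smul_eq_mul, smul_eq_mul] at h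
  linear_combination h

variable [CharZero K]

lemma coeff_dmul {V : K⟦X⟧} (t : ℕ) :
    coeff (R := K) t (V.derivativeFun * V ^ t) = coeff (R := K) (t+1) (V ^ (t+1)) := by
  have h1 : coeff (R := K) t ((V ^ (t+1)).derivativeFun) = coeff (R := K) (t+1) (V ^ (t+1)) * ((t : K)+1) :=
    coeff_derivativeFun _ t
  rw [dpow, coeff_C_mul] at h1
  have ht : ((t+1 : ℕ) : K) ≠ 0 := Nat.cast_ne_zero.mpr (Nat.succ_ne_zero t)
  apply mul_left_cancel₀ ht
  rw [show V ^ t * V.derivativeFun = V.derivativeFun * V ^ t from mul_comm _ _] at h1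
  rw [h1]
  push_cast
  ring

lemma keyC2 {Y U V : K⟦X⟧} (hXU : Y = X * U) (hUV : U * V = 1) (n m : ℕ) :
    coeff (R := K) n ((Y ^ (m+1)).derivativeFun * V ^ (n+1)) = if m = n then ((n+1 : ℕ) : K) else 0 := by
  have hYp : ∀ a : ℕ, Y ^ a = X ^ a * U ^ a := fun a => by rw [hXU, mul_pow]
  have e0 := hDUV hUV
  rcases lt_trichotomy m n with h | rfl | h
  · obtain ⟨t, rfl⟩ : ∃ t, n = m + t + 1 := ⟨n - m - 1, by omega⟩
    rw [if_neg (by omega)]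
    have hm := powUV hUV m
    have hm1 := powUV hUV (m+1)
    have hexp : (Y ^ (m+1)).derivativeFun * V ^ (m+t+1+1)
        = C (R := K) ((m+1 : ℕ) : K) * (X ^ m * V ^ (t+1))
          - C (R := K) ((m+1 : ℕ) : K) * (X ^ (m+1) * (V.derivativeFun * V ^ t)) := by
      rw [hYp, derivativeFun_mul, dpow, dpow, dX, smul_eq_mul, smul_eq_mul, mul_one]
      have hsplit1 : (V : K⟦X⟧) ^ (m+t+1+1) = V ^ m * V ^ (t+2) := by ring
      have hsplit2 : (V : K⟦X⟧) ^ (m+t+1+1) = V ^ (m+1) * V ^ (t+1) := by ring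
      linear_combination (C (R := K) ((m+1 : ℕ) : K) * X ^ (m+1) * U.derivativeFun * V ^ (t+2)) * hm
        + (C (R := K) ((m+1 : ℕ) : K) * X ^ m * V ^ (t+1)) * hm1
        + (C (R := K) ((m+1 : ℕ) : K) * X ^ (m+1) * V ^ (t+1)) * e0
        - (C (R := K) ((m+1 : ℕ) : K) * X ^ (m+1) * V.derivativeFun * V ^ t) * hUV
    rw [hexp, map_sub, coeff_C_mul, coeff_C_mul,
      coeff_X_pow_mul', coeff_X_pow_mul', if_pos (by omega), if_pos (by omega),
      show m + t + 1 - m = t + 1 by omega, show m + t + 1 - (m+1) = t by omega,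
      coeff_dmul]
    ring
  · rw [if_pos rfl]
    have hm1 := powUV hUV (m+1)
    have hexp : (Y ^ (m+1)).derivativeFun * V ^ (m+1)
        = C (R := K) ((m+1 : ℕ) : K) * X ^ m
          + X ^ (m+1) * (C (R := K) ((m+1 : ℕ) : K) * (U ^ m * U.derivativeFun) * V ^ (m+1)) := by
      rw [hYp, derivativeFun_mul, dpow, dpow, dX, smul_eq_mul, smul_eq_mul, mul_one]
      linear_combination (C (R := K) ((m+1 : ℕ) : K) * X ^ m) * hm1
    rw [hexp, map_add, coeff_C_mul, coeff_X_pow_mul', if_neg (by omega),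
      coeff_X_pow, if_pos rfl]
    simp
  · obtain ⟨r, rfl⟩ : ∃ r, m = n + 1 + r := ⟨m - n - 1, by omega⟩
    rw [if_neg (by omega)]
    have hexp : (Y ^ (n+1+r+1)).derivativeFun * V ^ (n+1)
        = C (R := K) ((n+1+r+1 : ℕ) : K)
          * (X ^ (n+1+r) * (U ^ (n+1+r) * Y.derivativeFun * V ^ (n+1))) := by
      rw [dpow, hYp]
      ring
    rw [hexp, coeff_C_mul, coeff_X_pow_mul', if_neg (by omega), mul_zero]

lemma keyC1 {Y U V : K⟦X⟧} (hXU : Y = X * U) (hUV : U * V = 1) (n i : ℕ) :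
    coeff (R := K) n (Y ^ i * (Y.derivativeFun * V ^ (n+1))) = if i = n then 1 else 0 := by
  have h2 := keyC2 hXU hUV n i
  rw [dpow] at h2
  have hrw : C (R := K) ((i+1 : ℕ) : K) * (Y ^ i * Y.derivativeFun) * V ^ (n+1)
      = C (R := K) ((i+1 : ℕ) : K) * (Y ^ i * (Y.derivativeFun * V ^ (n+1))) := by ring
  rw [hrw, coeff_C_mul] at h2
  have hi : ((i+1 : ℕ) : K) ≠ 0 := Nat.cast_ne_zero.mpr (Nat.succ_ne_zero i)
  apply mul_left_cancel₀ hi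
  rw [h2]
  split_ifs with h
  · subst h; rw [mul_one]
  · rw [mul_zero]

/-- The key residue lemma: `[Xⁿ] (P∘Y · Y' · V^{n+1}) = [Xⁿ] P` when `Y = X·U`, `U·V = 1`. -/
lemma keyL3 {Y U V : K⟦X⟧} (hXU : Y = X * U) (hUV : U * V = 1) (P : K⟦X⟧) (n : ℕ) :
    coeff (R := K) n (pcomp P Y * (Y.derivativeFun * V ^ (n+1))) = coeff (R := K) n P := by
  set T := PowerSeries.trunc (n+1) P with hT
  have h1 : coeff (R := K) n (pcomp P Y * (Y.derivativeFun * V ^ (n+1)))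
      = coeff (R := K) n (T.eval₂ (C (R := K)) Y * (Y.derivativeFun * V ^ (n+1))) := by
    rw [coeff_mul, coeff_mul]
    refine Finset.sum_congr rfl fun p hp => ?_
    have hp' := Finset.HasAntidiagonal.mem_antidiagonal.1 hp
    rw [coeff_pcomp hXU (show p.1 < n+1 by omega)]
  rw [h1, Polynomial.eval₂_eq_sum_range, Finset.sum_mul, map_sum]
  have h2 : ∀ i ∈ Finset.range (T.natDegree + 1),
      coeff (R := K) n (C (R := K) (T.coeff i) * Y ^ i * (Y.derivativeFun * V ^ (n+1)))
        = if i = n then T.coeff i else 0 := by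
    intro i _
    rw [mul_assoc, coeff_C_mul, keyC1 hXU hUV]
    split_ifs <;> simp
  rw [Finset.sum_congr rfl h2, Finset.sum_ite_eq']
  have hTn : T.coeff n = coeff (R := K) n P := by
    rw [hT, coeff_trunc, if_pos (Nat.lt_succ_self n)]
  split_ifs with h
  · exact hTn
  · rw [← hTn, Polynomial.coeff_eq_zero_of_natDegree_lt]
    rw [Finset.mem_range] at h
    omega

lemma one_sub_X_const : constantCoeff (R := K) (1 - X) = 1 := by simp

lemma W_eq_mk : ((1 - X : K⟦X⟧)⁻¹) = PowerSeries.mk fun _ => (1 : K) := by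
  have h1 : (PowerSeries.mk fun _ => (1:K)) * (1 - X) = 1 := by
    ext n
    rw [mul_sub, mul_one, map_sub, coeff_mk, ← pow_one (X : K⟦X⟧), coeff_mul_X_pow']
    rcases n with _ | n
    · norm_num
    · simp [coeff_one]
  have h2 := PowerSeries.mul_inv_cancel (1 - X : K⟦X⟧) (by rw [one_sub_X_const]; norm_num)
  calc (1 - X : K⟦X⟧)⁻¹ = ((PowerSeries.mk fun _ => (1:K)) * (1 - X)) * (1 - X)⁻¹ := by
        rw [h1, one_mul]
    _ = (PowerSeries.mk fun _ => (1:K)) * ((1 - X) * (1 - X)⁻¹) := by ring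
    _ = _ := by rw [h2, mul_one]

lemma coeff_one_sub_X_pow (s j : ℕ) :
    coeff (R := K) j ((1 - X) ^ s) = (-1) ^ j * (s.choose j : K) := by
  have hexp : (1 - X : K⟦X⟧) ^ s
      = ∑ i ∈ Finset.range (s+1), C (R := K) ((-1) ^ i * (s.choose i : K)) * X ^ i := by
    rw [sub_eq_neg_add, add_pow]
    refine Finset.sum_congr rfl fun i _ => ?_
    rw [one_pow, neg_pow, map_mul, map_pow, map_neg, map_one, map_natCast (C (R := K))]
    ring
  rw [hexp, map_sum]
  have h2 : ∀ i ∈ Finset.range (s+1),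
      coeff (R := K) j (C (R := K) ((-1) ^ i * (s.choose i : K)) * X ^ i)
        = if i = j then (-1) ^ j * (s.choose j : K) else 0 := by
    intro i _
    rw [coeff_C_mul, coeff_X_pow]
    rcases eq_or_ne i j with rfl | h
    · simp
    · rw [if_neg (Ne.symm h), if_neg h, mul_zero]
  rw [Finset.sum_congr rfl h2, Finset.sum_ite_eq']
  split_ifs with h
  · rfl
  · rw [Finset.mem_range] at h
    rw [Nat.choose_eq_zero_of_lt (by omega), Nat.cast_zero, mul_zero]

lemma sum_choose_diag (t j : ℕ) :
    ∑ k ∈ Finset.range (j+1), (t+k).choose k = (t+j+1).choose j := by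
  induction j with
  | zero => simp
  | succ j ih =>
    rw [Finset.sum_range_succ, ih]
    have h1 := Nat.choose_succ_succ (t+j+1) j
    have h2 := Nat.choose_succ_succ (t+j) j
    simp only [Nat.succ_eq_add_one, show t+(j+1) = t+j+1 from by omega] at *
    omega

lemma coeff_W_pow (t j : ℕ) :
    coeff (R := K) j (((1 - X : K⟦X⟧)⁻¹) ^ (t+1)) = ((t+j).choose j : K) := by
  induction t generalizing j with
  | zero => rw [pow_one, W_eq_mk, coeff_mk]; simp
  | succ t ih =>
    rw [pow_succ, coeff_mul, Finset.Nat.sum_antidiagonal_eq_sum_range_succ_mk]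
    have h2 : ∀ k ∈ Finset.range (j+1),
        coeff (R := K) k (((1 - X : K⟦X⟧)⁻¹) ^ (t+1)) * coeff (R := K) (j - k) ((1 - X : K⟦X⟧)⁻¹)
          = ((t+k).choose k : K) := by
      intro k _
      rw [ih, W_eq_mk, coeff_mk, mul_one]
    rw [Finset.sum_congr rfl h2, ← Nat.cast_sum]
    rw [sum_choose_diag]
    norm_num [show t + 1 + j = t + j + 1 by omega]

/-- `[X^j] (1-X)^s (1-X)^{-t} = (-1)^j ichoose (s-t) j`. -/
lemma coeff_ZW (s t j : ℕ) :
    coeff (R := K) j ((1 - X) ^ s * ((1 - X : K⟦X⟧)⁻¹) ^ t)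
      = (((-1) ^ j * ichoose ((s:ℤ) - (t:ℤ)) j : ℤ) : K) := by
  induction t generalizing s with
  | zero =>
    rw [pow_zero, mul_one, coeff_one_sub_X_pow, ichoose, Nat.cast_zero, sub_zero,
      if_pos (Int.natCast_nonneg s), Int.toNat_natCast]
    push_cast
    ring
  | succ t ih =>
    rcases s with _ | s
    · rw [pow_zero, one_mul, coeff_W_pow, ichoose, if_neg (by omega)]
      have h1 : (-(((0:ℕ):ℤ) - ((t+1 : ℕ):ℤ)) + j - 1).toNat = t + j := by
        push_cast; omega
      rw [h1]
      have h2 : ((-1:ℤ))^j * ((-1:ℤ))^j * ((t+j).choose j : ℤ) = ((t+j).choose j : ℤ) := by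
        rw [← mul_pow]; norm_num
      rw [← mul_assoc, h2]
      push_cast
      ring
    · have hstep : ((1 - X) ^ (s+1) * ((1 - X : K⟦X⟧)⁻¹) ^ (t+1))
          = ((1 - X) ^ s * ((1 - X : K⟦X⟧)⁻¹) ^ t) * ((1 - X) * (1 - X : K⟦X⟧)⁻¹) := by
        ring
      rw [hstep, PowerSeries.mul_inv_cancel (1 - X : K⟦X⟧) (by rw [one_sub_X_const]; norm_num),
        mul_one, ih]
      have : ((s:ℤ)) - (t:ℤ) = ((s+1 : ℕ):ℤ) - ((t+1 : ℕ):ℤ) := by push_cast; ring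
      rw [this]

lemma ichoose_natCast (n k : ℕ) : ichoose (n : ℤ) k = (n.choose k : ℤ) := by
  rw [ichoose, if_pos (Int.natCast_nonneg n), Int.toNat_natCast]

lemma coeff_phi (a : K) (p q m : ℕ) :
    coeff (R := K) m ((((1 - X) ^ p * ((1 - X : K⟦X⟧)⁻¹) ^ q * (1 - C (R := K) a * (1 - X))) ^ (m+1))
        * ((1 - X : K⟦X⟧)⁻¹))
      = ∑ i ∈ Finset.range (m+2), (-1) ^ i * a ^ i * (((m+1).choose i : ℕ) : K) *
          ((((-1) ^ m * ichoose (((p*(m+1)+i : ℕ) : ℤ) - ((q*(m+1)+1 : ℕ) : ℤ)) m : ℤ)) : K) := by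
  have hb : (1 - C (R := K) a * (1 - X) : K⟦X⟧) ^ (m+1)
      = ∑ i ∈ Finset.range (m+2), C (R := K) ((-1) ^ i * a ^ i * (((m+1).choose i : ℕ) : K))
          * (1 - X) ^ i := by
    rw [sub_eq_neg_add, add_pow]
    refine Finset.sum_congr rfl fun i _ => ?_
    rw [one_pow, map_mul, map_mul, map_pow, map_neg, map_one, map_pow, map_natCast (C (R := K)),
      neg_pow, mul_pow]
    ring
  have hphi : ((((1 - X) ^ p * ((1 - X : K⟦X⟧)⁻¹) ^ q * (1 - C (R := K) a * (1 - X))) ^ (m+1))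
        * ((1 - X : K⟦X⟧)⁻¹))
      = ∑ i ∈ Finset.range (m+2), C (R := K) ((-1) ^ i * a ^ i * (((m+1).choose i : ℕ) : K))
          * ((1 - X) ^ (p*(m+1)+i) * ((1 - X : K⟦X⟧)⁻¹) ^ (q*(m+1)+1)) := by
    rw [mul_pow, mul_pow, hb, ← pow_mul, ← pow_mul, Finset.mul_sum, Finset.sum_mul]
    refine Finset.sum_congr rfl fun i _ => ?_
    rw [pow_add, pow_add, pow_one]
    ring
  rw [hphi, map_sum]
  refine Finset.sum_congr rfl fun i _ => ?_
  rw [coeff_C_mul, coeff_ZW]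

end Stmt11Aux

open Stmt11Aux

/-- For the solution `Y(X)` (with `Y(0)=0`, coefficients in `ℚ[a]`) of
`Y = X (1-Y)^τ (1 - a(1-Y))` (stated with denominators cleared so as to make
sense for any integer `τ`), one has
`log(1-Y(X)) = Σ_{n≥1} (X^n/n) Σ_{i≥0} (-1)^{n+i} C(n,i) C(nτ+i-1,n-1) a^i`. -/
theorem stmt11 (τ : ℤ) (Y : PowerSeries (Polynomial ℚ))
    (hY0 : PowerSeries.constantCoeff (R := Polynomial ℚ) Y = 0)
    (hY : Y * (1 - Y) ^ ((-τ).toNat) =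
      PowerSeries.X * (1 - Y) ^ (τ.toNat) *
        (1 - PowerSeries.C (R := Polynomial ℚ) Polynomial.X * (1 - Y))) :
    plog (1 - Y) =
      PowerSeries.mk (fun n => if n = 0 then 0 else
        ∑ i ∈ Finset.range (n + 1),
          Polynomial.C (((-1 : ℚ) ^ (n + i) * (ichoose (n : ℤ) i : ℚ) *
              (ichoose ((n : ℤ) * τ + i - 1) (n - 1) : ℚ)) / n) *
            Polynomial.X ^ i) := by
  classical
  set K := FractionRing (Polynomial ℚ) with hK
  let ι : Polynomial ℚ →+* K := algebraMap (Polynomial ℚ) K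
  have hinj : Function.Injective ι := IsFractionRing.injective (Polynomial ℚ) K
  haveI : CharZero K := charZero_of_injective_algebraMap hinj
  have hρ : ∀ r : ℚ, ι (Polynomial.C r) = (r : K) := fun r =>
    eq_ratCast (ι.comp (Polynomial.C : ℚ →+* Polynomial ℚ)) r
  refine PowerSeries.ext fun n => ?_
  rw [coeff_mk]
  rcases n with _ | m
  · rw [if_pos rfl, plog, coeff_mk]
    simp
  · rw [if_neg (Nat.succ_ne_zero m)]
    apply hinj
    set p := τ.toNat with hp
    set q := (-τ).toNat with hq
    have hpq : (p : ℤ) - (q : ℤ) = τ := by rw [hp, hq]; omega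
    set Yh := PowerSeries.map ι Y with hYh
    have hY0h : constantCoeff (R := K) Yh = 0 := by
      rw [hYh, ← coeff_zero_eq_constantCoeff, coeff_map, coeff_zero_eq_constantCoeff, hY0,
        map_zero]
    set Z := (1 - Yh : K⟦X⟧) with hZ
    have hZc : constantCoeff (R := K) Z = 1 := by rw [hZ, map_sub, map_one, hY0h, sub_zero]
    set W := Z⁻¹ with hW
    have hZW : Z * W = 1 := PowerSeries.mul_inv_cancel Z (by rw [hZc]; exact one_ne_zero)
    set a' := ι Polynomial.X with ha'
    have h1a : (1 : K) - a' ≠ 0 := by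
      intro h
      rw [sub_eq_zero] at h
      have hx : ι (1 : Polynomial ℚ) = ι Polynomial.X := by rw [map_one, h, ha']
      have h01 := congrArg (fun f : Polynomial ℚ => f.coeff 1) (hinj hx)
      simp [Polynomial.coeff_one] at h01
    set U0 := Z ^ p * W ^ q * (1 - C (R := K) a' * Z) with hU0
    have hU0c : constantCoeff (R := K) U0 = 1 - a' := by
      have hWc0 : constantCoeff (R := K) W = 1 := by rw [hW, constantCoeff_inv, hZc, inv_one]
      rw [hU0, map_mul, map_mul, map_pow, map_pow, hZc, hWc0, map_sub, map_one, map_mul,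
        constantCoeff_C, hZc]
      norm_num
    set V := U0⁻¹ with hV
    have hUV : U0 * V = 1 := PowerSeries.mul_inv_cancel U0 (by rw [hU0c]; exact h1a)
    have hmap : Yh * Z ^ q = X * Z ^ p * (1 - C (R := K) a' * Z) := by
      have h2 := congrArg (PowerSeries.map ι) hY
      simp only [map_mul, map_pow, map_sub, map_one, PowerSeries.map_X,
        PowerSeries.map_C] at h2
      rw [hZ, hYh, ha']
      exact h2
    have hXU : Yh = X * U0 := by
      have h3 : Yh * (Z ^ q * W ^ q) = X * Z ^ p * (1 - C (R := K) a' * Z) * W ^ q := by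
        rw [← mul_assoc, hmap]
      rw [powUV hZW q, mul_one] at h3
      rw [hU0, h3]; ring
    have hpcZ : pcomp (1 - X) Yh = Z := by
      rw [pcomp_sub hXU, pcomp_one hXU, pcomp_X hXU, hZ]
    have hWc : (1 - X : K⟦X⟧) * (1 - X)⁻¹ = 1 :=
      PowerSeries.mul_inv_cancel _ (by rw [one_sub_X_const]; exact one_ne_zero)
    have hpcW : pcomp ((1 - X : K⟦X⟧)⁻¹) Yh = W := by
      have h4 := pcomp_mul hXU (1 - X) ((1 - X : K⟦X⟧)⁻¹)
      rw [hWc, pcomp_one hXU, hpcZ] at h4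
      calc pcomp ((1 - X : K⟦X⟧)⁻¹) Yh = (Z * W) * pcomp ((1 - X : K⟦X⟧)⁻¹) Yh := by
            rw [hZW, one_mul]
        _ = W * (Z * pcomp ((1 - X : K⟦X⟧)⁻¹) Yh) := by ring
        _ = W := by rw [← h4, mul_one]
    set φ := ((1 - X) ^ p * ((1 - X : K⟦X⟧)⁻¹) ^ q * (1 - C (R := K) a' * (1 - X))) with hφ
    have hpcφ : pcomp φ Yh = U0 := by
      have hone : pcomp (1 - C (R := K) a' * (1 - X)) Yh = 1 - C (R := K) a' * Z := by
        rw [pcomp_sub hXU, pcomp_one hXU, pcomp_mul hXU, pcomp_C hXU, hpcZ]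
      rw [hφ, pcomp_mul hXU, pcomp_mul hXU, pcomp_pow hXU, pcomp_pow hXU, hone, hpcZ,
        hpcW, hU0]
    have hKEY : ∀ j, j ≤ m → ((m+1 : ℕ) : K) * coeff (R := K) (m+1) (Yh ^ (j+1))
        = ((j+1 : ℕ) : K) * coeff (R := K) (m - j) (φ ^ (m+1)) := by
      intro j hj
      have h5 : coeff (R := K) m ((Yh ^ (j+1)).derivativeFun)
          = coeff (R := K) (m+1) (Yh ^ (j+1)) * ((m : K)+1) := coeff_derivativeFun _ m
      rw [dpow] at h5
      have h6 : Yh ^ j * Yh.derivativeFun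
          = pcomp (X ^ j * φ ^ (m+1)) Yh * (Yh.derivativeFun * V ^ (m+1)) := by
        rw [pcomp_mul hXU, pcomp_pow hXU, pcomp_pow hXU, pcomp_X hXU, hpcφ]
        linear_combination (-(Yh ^ j * Yh.derivativeFun)) * powUV hUV (m+1)
      have h7 := keyL3 hXU hUV (X ^ j * φ ^ (m+1)) m
      rw [coeff_X_pow_mul', if_pos hj, ← h6] at h7
      rw [coeff_C_mul, h7] at h5
      rw [h5]
      push_cast
      ring
    rw [plog, coeff_mk, map_sum]
    have hterm : ∀ k ∈ Finset.range (m+1+1),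
        ι (Polynomial.C ((-1 : ℚ) ^ (k+1) / k) *
            PowerSeries.coeff (R := Polynomial ℚ) (m+1) ((1 - Y - 1) ^ k))
          = -(1/(k : K)) * coeff (R := K) (m+1) (Yh ^ k) := by
      intro k _
      rw [map_mul, hρ, show (1 - Y - 1 : PowerSeries (Polynomial ℚ)) = -Y from by ring]
      have hc : ι (PowerSeries.coeff (R := Polynomial ℚ) (m+1) ((-Y) ^ k))
          = coeff (R := K) (m+1) ((-Yh) ^ k) := by
        rw [← coeff_map, map_pow, map_neg, hYh]
      rw [hc]
      have hnp : ((-Yh) ^ k : K⟦X⟧) = C (R := K) ((-1 : K) ^ k) * Yh ^ k := by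
        rw [map_pow, map_neg, map_one, ← neg_one_mul, mul_pow]
      rw [hnp, coeff_C_mul]
      have hsign : (-1 : K) ^ (k+1) * (-1 : K) ^ k = -1 := by
        rw [← pow_add]
        exact Odd.neg_one_pow ⟨k, by ring⟩
      have hcast : (((-1 : ℚ) ^ (k+1) / k : ℚ) : K) = (-1 : K) ^ (k+1) / (k : K) := by
        push_cast
        ring
      rw [hcast]
      calc (-1 : K) ^ (k+1) / (k : K) * ((-1 : K) ^ k * coeff (R := K) (m+1) (Yh ^ k))
          = ((-1 : K) ^ (k+1) * (-1 : K) ^ k) * coeff (R := K) (m+1) (Yh ^ k) / (k : K) := by ring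
        _ = -(1/(k : K)) * coeff (R := K) (m+1) (Yh ^ k) := by rw [hsign]; ring
    rw [Finset.sum_congr rfl hterm, Finset.sum_range_succ']
    have hf0 : -(1/((0 : ℕ) : K)) * coeff (R := K) (m+1) (Yh ^ 0) = 0 := by norm_num
    rw [hf0, add_zero]
    have hterm2 : ∀ i ∈ Finset.range (m+1),
        -(1/((i+1 : ℕ) : K)) * coeff (R := K) (m+1) (Yh ^ (i+1))
          = -(1/((m+1 : ℕ) : K)) * coeff (R := K) (m - i) (φ ^ (m+1)) := by
      intro i hi
      rw [Finset.mem_range] at hi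
      have h8 := hKEY i (by omega)
      have hm1 : ((m+1 : ℕ) : K) ≠ 0 := Nat.cast_ne_zero.mpr (Nat.succ_ne_zero m)
      have hi1 : ((i+1 : ℕ) : K) ≠ 0 := Nat.cast_ne_zero.mpr (Nat.succ_ne_zero i)
      rw [neg_mul, neg_mul, one_div_mul_eq_div, one_div_mul_eq_div, neg_inj,
        div_eq_div_iff hi1 hm1]
      linear_combination h8
    rw [Finset.sum_congr rfl hterm2, ← Finset.mul_sum]
    have hrefl : ∑ i ∈ Finset.range (m+1), coeff (R := K) (m - i) (φ ^ (m+1))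
        = ∑ i ∈ Finset.range (m+1), coeff (R := K) i (φ ^ (m+1)) := by
      have h9 := Finset.sum_range_reflect (fun i => coeff (R := K) i (φ ^ (m+1))) (m+1)
      simpa using h9
    have hgeo : ∑ i ∈ Finset.range (m+1), coeff (R := K) i (φ ^ (m+1))
        = coeff (R := K) m (φ ^ (m+1) * ((1 - X : K⟦X⟧)⁻¹)) := by
      rw [coeff_mul, Finset.Nat.sum_antidiagonal_eq_sum_range_succ_mk]
      refine (Finset.sum_congr rfl fun i _ => ?_).symm
      rw [W_eq_mk, coeff_mk, mul_one]
    rw [hrefl, hgeo, hφ, coeff_phi a' p q m, Finset.mul_sum, map_sum]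
    refine Finset.sum_congr rfl fun i _ => ?_
    rw [map_mul, hρ, map_pow, ← ha']
    have hA : ((p*(m+1)+i : ℕ) : ℤ) - ((q*(m+1)+1 : ℕ) : ℤ) = ((m+1 : ℕ) : ℤ) * τ + i - 1 := by
      push_cast
      linear_combination ((m : ℤ)+1) * hpq
    rw [hA, ichoose_natCast, show m+1-1 = m from rfl]
    push_cast
    rw [Int.cast_mul]
    push_cast
    ring
end

section
/- For the functional equation Y = X(1-Y)^τ(1-a(1-Y)) with Y(0)=0, the solution satisfies 1 - Y(X) = 1 + Σ_{n≥1} (X^n/n) Σ_{i≥0} (-1)^{n+i} C(n,i) C(nτ+i, n-1) a^i. -/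
open PowerSeries

noncomputable section LagrangeAux

set_option linter.unusedSectionVars false

variable {K : Type*} [Field K] [CharZero K]


def oneSubXU (K : Type*) [Field K] : (PowerSeries K)ˣ :=
  Units.mkOfMulEqOne (1 - PowerSeries.X) (PowerSeries.mk 1)
    (by rw [mul_comm]; exact PowerSeries.mk_one_mul_one_sub_eq_one (S := K))

lemma oneSubXU_val (K : Type*) [Field K] :
    ((oneSubXU K : (PowerSeries K)ˣ) : PowerSeries K) = 1 - PowerSeries.X := rfl

lemma coeff_one_sub_X_pow (N k : ℕ) :
    PowerSeries.coeff k ((1 - PowerSeries.X) ^ N) = (-1) ^ k * (N.choose k : K) := by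
  have h : ((1 : PowerSeries K) - PowerSeries.X) ^ N
      = ∑ i ∈ Finset.range (N + 1),
          PowerSeries.C ((-1) ^ i * (N.choose i : K)) * PowerSeries.X ^ i := by
    rw [sub_eq_add_neg, add_comm, add_pow]
    refine Finset.sum_congr rfl fun i hi => ?_
    rw [one_pow, mul_one, neg_pow, map_mul, map_pow, map_neg, map_one, map_natCast]
    ring
  rw [h, map_sum, Finset.sum_eq_single k]
  · rw [PowerSeries.coeff_C_mul, PowerSeries.coeff_X_pow, if_pos rfl, mul_one]
  · intro i hi hne
    rw [PowerSeries.coeff_C_mul, PowerSeries.coeff_X_pow, if_neg (Ne.symm hne), mul_zero]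
  · intro hk
    have : N < k := by simpa using hk
    rw [PowerSeries.coeff_C_mul, Nat.choose_eq_zero_of_lt this]
    simp

lemma ichoose_natCast (n : ℕ) (k : ℕ) : ichoose (n : ℤ) k = (n.choose k : ℤ) := by
  simp [ichoose]

lemma coeff_oneSubXU_zpow (M : ℤ) (k : ℕ) :
    PowerSeries.coeff k ((oneSubXU K ^ M : (PowerSeries K)ˣ) : PowerSeries K)
      = (-1) ^ k * (ichoose M k : K) := by
  rcases M with N | m
  · rw [Int.ofNat_eq_natCast, zpow_natCast, Units.val_pow_eq_pow_val, oneSubXU_val,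
      coeff_one_sub_X_pow, ichoose_natCast]
    push_cast
    ring
  · have h2 : (oneSubXU K ^ (m + 1)) = (PowerSeries.invOneSubPow K (m + 1))⁻¹ := by
      apply Units.ext
      rw [Units.val_pow_eq_pow_val, oneSubXU_val]
      rw [← PowerSeries.invOneSubPow_inv_eq_one_sub_pow K (m + 1)]
      rfl
    rw [zpow_negSucc, h2, inv_inv, PowerSeries.invOneSubPow_val_succ_eq_mk_add_choose,
      PowerSeries.coeff_mk]
    have h3 : ichoose (Int.negSucc m) k = (-1) ^ k * ((m + k).choose k : ℤ) := by
      rw [ichoose, if_neg (by rw [Int.negSucc_eq]; omega)]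
      have h4 : (-Int.negSucc m + k - 1).toNat = m + k := by
        simp [Int.negSucc_eq]; omega
      rw [h4]
    rw [h3]
    push_cast
    rw [← mul_assoc, ← mul_pow]
    simp [Nat.choose_symm_add]


lemma coe_sub' (p q : Polynomial K) :
    ((p - q : Polynomial K) : PowerSeries K) = (p : PowerSeries K) - (q : PowerSeries K) := by
  ext n
  simp [Polynomial.coeff_coe, Polynomial.coeff_sub]

lemma pol_part (q : Polynomial K) (n : ℕ) (hq : ∀ d < n, q.coeff d = 0) (Y : PowerSeries K) :
    ∃ s, Polynomial.aeval Y q = Y ^ n * s := by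
  obtain ⟨q', rfl⟩ := (Polynomial.X_pow_dvd_iff).mpr hq
  exact ⟨Polynomial.aeval Y q', by rw [map_mul, map_pow, Polynomial.aeval_X]⟩

lemma unit_cancel (A : (PowerSeries K)ˣ) (s t : ℕ) :
    ((A ^ s : (PowerSeries K)ˣ) : PowerSeries K) * ((A⁻¹ ^ (s + t) : (PowerSeries K)ˣ) : PowerSeries K)
      = ((A⁻¹ ^ t : (PowerSeries K)ˣ) : PowerSeries K) := by
  rw [← Units.val_mul]
  congr 1
  rw [pow_add, ← mul_assoc, ← mul_pow, mul_inv_cancel, one_pow, one_mul]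

lemma coreB (Y : PowerSeries K) (A : (PowerSeries K)ˣ)
    (hYA : Y = PowerSeries.X * ((A : (PowerSeries K)ˣ) : PowerSeries K)) (j : ℕ) :
    PowerSeries.coeff (j + 1)
      (PowerSeries.derivative K Y * ((A⁻¹ ^ (j + 2) : (PowerSeries K)ˣ) : PowerSeries K)) = 0 := by
  set h : PowerSeries K := ((A⁻¹ ^ (j + 1) : (PowerSeries K)ˣ) : PowerSeries K) with hh
  have hA1 : ((A ^ (j + 1) : (PowerSeries K)ˣ) : PowerSeries K) * h = 1 := by
    rw [hh, ← Units.val_mul, ← mul_pow, mul_inv_cancel, one_pow, Units.val_one]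
  have hYp : Y ^ (j + 1) * h = PowerSeries.X ^ (j + 1) := by
    rw [hYA, mul_pow, ← Units.val_pow_eq_pow_val, mul_assoc, hA1, mul_one]
  have hd := congrArg (PowerSeries.derivative K) hYp
  rw [Derivation.leibniz, Derivation.leibniz_pow, Derivation.leibniz_pow,
    PowerSeries.derivative_X] at hd
  simp only [smul_eq_mul, nsmul_eq_mul, Nat.add_sub_cancel, mul_one, Nat.cast_add,
    Nat.cast_one] at hd
  -- hd : Y^(j+1) * D h + h * ((j+1) * (Y^j * D Y)) = (j+1) * X^j
  have hY1 : Y ^ (j + 1) = PowerSeries.X ^ (j + 1) * ((A ^ (j + 1) : (PowerSeries K)ˣ) : PowerSeries K) := by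
    rw [hYA, mul_pow, Units.val_pow_eq_pow_val]
  have hY2 : Y ^ j = PowerSeries.X ^ j * ((A ^ j : (PowerSeries K)ˣ) : PowerSeries K) := by
    rw [hYA, mul_pow, Units.val_pow_eq_pow_val]
  rw [hY1, hY2] at hd
  have fact2 : ((A ^ j : (PowerSeries K)ˣ) : PowerSeries K) * h * h
      = ((A⁻¹ ^ (j + 2) : (PowerSeries K)ˣ) : PowerSeries K) := by
    have u1 := unit_cancel A j 1
    rw [hh]
    rw [show j + 1 = j + 1 from rfl] at u1
    calc ((A ^ j : (PowerSeries K)ˣ) : PowerSeries K) * ((A⁻¹ ^ (j+1) : (PowerSeries K)ˣ) : PowerSeries K) * ((A⁻¹ ^ (j+1) : (PowerSeries K)ˣ) : PowerSeries K)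
        = ((A⁻¹ ^ 1 : (PowerSeries K)ˣ) : PowerSeries K) * ((A⁻¹ ^ (j+1) : (PowerSeries K)ˣ) : PowerSeries K) := by rw [u1]
      _ = ((A⁻¹ ^ (j + 2) : (PowerSeries K)ˣ) : PowerSeries K) := by
          rw [← Units.val_mul, ← pow_add, show 1+(j+1) = j+2 from by omega]
  set G : PowerSeries K := ((A⁻¹ ^ (j + 2) : (PowerSeries K)ˣ) : PowerSeries K) with hG
  set DY : PowerSeries K := PowerSeries.derivative K Y with hDY
  set Dh : PowerSeries K := PowerSeries.derivative K h with hDh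
  have E : PowerSeries.X ^ (j+1) * Dh
      + ((j : PowerSeries K) + 1) * (PowerSeries.X ^ j * (DY * G))
      = ((j : PowerSeries K) + 1) * (PowerSeries.X ^ j * h) := by
    linear_combination h * hd - (PowerSeries.X ^ (j+1) * Dh) * hA1
      - (((j : PowerSeries K) + 1) * PowerSeries.X ^ j * DY) * fact2
  have hE := congrArg (PowerSeries.coeff (2*j+1)) E
  have cast1 : ((j : PowerSeries K) + 1) = PowerSeries.C ((j : K) + 1) := by
    rw [map_add, map_natCast, map_one]
  rw [map_add, cast1, PowerSeries.coeff_C_mul, PowerSeries.coeff_C_mul,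
    show 2*j+1 = j + (j+1) by ring, PowerSeries.coeff_X_pow_mul] at hE
  rw [show j + (j+1) = (j+1) + j by ring, PowerSeries.coeff_X_pow_mul,
    PowerSeries.coeff_X_pow_mul] at hE
  rw [hDh, PowerSeries.coeff_derivative] at hE
  -- hE : coeff (j+1) h * (j+1) + ((j:K)+1) * coeff (j+1) (DY * G) = ((j:K)+1) * coeff (j+1) h
  have hne : ((j : K) + 1) ≠ 0 := by
    have h9 := Nat.cast_ne_zero (R := K) (n := j+1) |>.mpr (Nat.succ_ne_zero j)
    push_cast at h9
    exact h9
  have : ((j : K) + 1) * PowerSeries.coeff (j+1) (DY * G) = 0 := by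
    push_cast at hE ⊢
    linear_combination hE
  exact (mul_eq_zero.mp this).resolve_left hne

lemma coreAB (Y : PowerSeries K) (A : (PowerSeries K)ˣ)
    (hYA : Y = PowerSeries.X * ((A : (PowerSeries K)ˣ) : PowerSeries K)) (k i : ℕ) (hi : i ≤ k) :
    PowerSeries.coeff k
      (PowerSeries.derivative K Y * ((A⁻¹ ^ (k + 1) : (PowerSeries K)ˣ) : PowerSeries K) * Y ^ i)
      = if i = k then 1 else 0 := by
  rcases eq_or_lt_of_le hi with rfl | hlt
  · rw [if_pos rfl]
    have hY2 : Y ^ i = PowerSeries.X ^ i * ((A ^ i : (PowerSeries K)ˣ) : PowerSeries K) := by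
      rw [hYA, mul_pow, Units.val_pow_eq_pow_val]
    have u := unit_cancel A i 1
    have hre : PowerSeries.derivative K Y * ((A⁻¹ ^ (i + 1) : (PowerSeries K)ˣ) : PowerSeries K) * Y ^ i
        = PowerSeries.X ^ i * (PowerSeries.derivative K Y * ((A⁻¹ ^ 1 : (PowerSeries K)ˣ) : PowerSeries K)) := by
      rw [hY2]
      linear_combination (PowerSeries.X ^ i * PowerSeries.derivative K Y) * u
    rw [hre, PowerSeries.coeff_X_pow_mul', if_pos le_rfl, Nat.sub_self,
      PowerSeries.coeff_zero_eq_constantCoeff_apply, map_mul]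
    have c1 : PowerSeries.constantCoeff (PowerSeries.derivative K Y)
        = PowerSeries.constantCoeff ((A : (PowerSeries K)ˣ) : PowerSeries K) := by
      rw [← PowerSeries.coeff_zero_eq_constantCoeff_apply, PowerSeries.coeff_derivative,
        hYA, PowerSeries.coeff_succ_X_mul, PowerSeries.coeff_zero_eq_constantCoeff_apply]
      ring
    rw [c1, ← map_mul, pow_one, ← Units.val_mul, mul_inv_cancel, Units.val_one, map_one]
  · rw [if_neg hlt.ne]
    obtain ⟨j, rfl⟩ : ∃ j, k = i + (j + 1) := ⟨k - i - 1, by omega⟩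
    have hY2 : Y ^ i = PowerSeries.X ^ i * ((A ^ i : (PowerSeries K)ˣ) : PowerSeries K) := by
      rw [hYA, mul_pow, Units.val_pow_eq_pow_val]
    have u := unit_cancel A i (j + 2)
    have hre : PowerSeries.derivative K Y * ((A⁻¹ ^ (i + (j + 1) + 1) : (PowerSeries K)ˣ) : PowerSeries K) * Y ^ i
        = PowerSeries.X ^ i * (PowerSeries.derivative K Y * ((A⁻¹ ^ (j + 2) : (PowerSeries K)ˣ) : PowerSeries K)) := by
      rw [hY2, show i + (j + 1) + 1 = i + (j + 2) from by omega]
      linear_combination (PowerSeries.X ^ i * PowerSeries.derivative K Y) * u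
    rw [hre, show i + (j + 1) = (j + 1) + i from by ring, PowerSeries.coeff_X_pow_mul]
    exact coreB Y A hYA j

lemma exists_aeval (Y : PowerSeries K) (V : (PowerSeries K)ˣ)
    (hV : ((V : (PowerSeries K)ˣ) : PowerSeries K) = 1 - Y) (M : ℤ) (n : ℕ) :
    ∃ s : PowerSeries K,
      ((V ^ M : (PowerSeries K)ˣ) : PowerSeries K)
        = Polynomial.aeval Y (PowerSeries.trunc n ((oneSubXU K ^ M : (PowerSeries K)ˣ) : PowerSeries K))
          + Y ^ n * s := by
  rcases M with N | m
  · rw [Int.ofNat_eq_natCast, zpow_natCast]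
    have hWv : ((oneSubXU K ^ N : (PowerSeries K)ˣ) : PowerSeries K)
        = ((((1 - Polynomial.X) ^ N : Polynomial K)) : PowerSeries K) := by
      rw [Units.val_pow_eq_pow_val, oneSubXU_val, Polynomial.coe_pow, coe_sub',
        Polynomial.coe_one, Polynomial.coe_X]
    set p := PowerSeries.trunc n ((oneSubXU K ^ N : (PowerSeries K)ˣ) : PowerSeries K) with hp
    set q := ((1 - Polynomial.X : Polynomial K) ^ N) - p with hqdef
    have hq : ∀ d < n, q.coeff d = 0 := by
      intro d hd
      rw [hqdef, Polynomial.coeff_sub, hp, PowerSeries.coeff_trunc, if_pos hd, hWv,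
        Polynomial.coeff_coe, sub_eq_zero]
    obtain ⟨s, hs⟩ := pol_part q n hq Y
    refine ⟨s, ?_⟩
    have h1 : Polynomial.aeval Y q
        = (1 - Y) ^ N - Polynomial.aeval Y p := by
      rw [hqdef, map_sub, map_pow, map_sub, map_one, Polynomial.aeval_X]
    have h2 : ((V ^ N : (PowerSeries K)ˣ) : PowerSeries K) = (1 - Y) ^ N := by
      rw [Units.val_pow_eq_pow_val, hV]
    rw [h2]
    linear_combination hs - h1
  · set g := ((oneSubXU K ^ (Int.negSucc m) : (PowerSeries K)ˣ) : PowerSeries K) with hg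
    set p := PowerSeries.trunc n g with hp
    have hWg : ((1 : PowerSeries K) - PowerSeries.X) ^ (m + 1) * g = 1 := by
      rw [hg, zpow_negSucc, ← oneSubXU_val K, ← Units.val_pow_eq_pow_val, ← Units.val_mul,
        mul_inv_cancel, Units.val_one]
    set q := (1 - Polynomial.X : Polynomial K) ^ (m + 1) * p - 1 with hqdef
    have hcoe : (q : PowerSeries K)
        = ((1 : PowerSeries K) - PowerSeries.X) ^ (m + 1) * (p : PowerSeries K) - 1 := by
      rw [hqdef, coe_sub', Polynomial.coe_mul, Polynomial.coe_pow, coe_sub',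
        Polynomial.coe_one, Polynomial.coe_X]
    have hdvd : (PowerSeries.X : PowerSeries K) ^ n ∣ (q : PowerSeries K) := by
      have hfac : (q : PowerSeries K)
          = ((1:PowerSeries K) - PowerSeries.X) ^ (m+1) * ((p : PowerSeries K) - g) := by
        rw [hcoe]; linear_combination hWg
      rw [hfac]
      refine Dvd.dvd.mul_left ?_ _
      rw [PowerSeries.X_pow_dvd_iff]
      intro d hd
      rw [map_sub, Polynomial.coeff_coe, hp, PowerSeries.coeff_trunc, if_pos hd, sub_self]
    have hq : ∀ d < n, q.coeff d = 0 := by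
      intro d hd
      have := (PowerSeries.X_pow_dvd_iff.mp hdvd) d hd
      rwa [Polynomial.coeff_coe] at this
    obtain ⟨s₀, hs₀⟩ := pol_part q n hq Y
    have ha : (1 - Y) ^ (m + 1) * Polynomial.aeval Y p - 1 = Y ^ n * s₀ := by
      rw [← hs₀, hqdef, map_sub, map_mul, map_pow, map_sub, map_one, Polynomial.aeval_X]
    set v := ((V ^ (Int.negSucc m) : (PowerSeries K)ˣ) : PowerSeries K) with hv
    have hVg : v * (1 - Y) ^ (m + 1) = 1 := by
      rw [hv, zpow_negSucc, ← hV, ← Units.val_pow_eq_pow_val, ← Units.val_mul,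
        inv_mul_cancel, Units.val_one]
    refine ⟨-(v * s₀), ?_⟩
    linear_combination (-v) * ha + (Polynomial.aeval Y p) * hVg

lemma key_coeff (Y : PowerSeries K) (A V : (PowerSeries K)ˣ)
    (hYA : Y = PowerSeries.X * ((A : (PowerSeries K)ˣ) : PowerSeries K))
    (hV : ((V : (PowerSeries K)ˣ) : PowerSeries K) = 1 - Y) (M : ℤ) (k : ℕ) :
    PowerSeries.coeff k
      (PowerSeries.derivative K Y * ((A⁻¹ ^ (k + 1) : (PowerSeries K)ˣ) : PowerSeries K)
        * ((V ^ M : (PowerSeries K)ˣ) : PowerSeries K))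
      = PowerSeries.coeff k ((oneSubXU K ^ M : (PowerSeries K)ˣ) : PowerSeries K) := by
  obtain ⟨s, hs⟩ := exists_aeval Y V hV M (k + 1)
  rw [hs, mul_add, map_add]
  have h2 : PowerSeries.coeff k
      (PowerSeries.derivative K Y * ((A⁻¹ ^ (k + 1) : (PowerSeries K)ˣ) : PowerSeries K)
        * (Y ^ (k + 1) * s)) = 0 := by
    have hY2 : Y ^ (k + 1)
        = PowerSeries.X ^ (k + 1) * ((A ^ (k + 1) : (PowerSeries K)ˣ) : PowerSeries K) := by
      rw [hYA, mul_pow, Units.val_pow_eq_pow_val]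
    have u : ((A ^ (k + 1) : (PowerSeries K)ˣ) : PowerSeries K)
        * ((A⁻¹ ^ (k + 1) : (PowerSeries K)ˣ) : PowerSeries K) = 1 := by
      rw [← Units.val_mul, ← mul_pow, mul_inv_cancel, one_pow, Units.val_one]
    have hre : PowerSeries.derivative K Y * ((A⁻¹ ^ (k + 1) : (PowerSeries K)ˣ) : PowerSeries K)
        * (Y ^ (k + 1) * s)
        = PowerSeries.X ^ (k + 1) * (PowerSeries.derivative K Y * s) := by
      rw [hY2]
      linear_combination (PowerSeries.X ^ (k+1) * PowerSeries.derivative K Y * s) * u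
    rw [hre, PowerSeries.coeff_X_pow_mul', if_neg (by omega)]
  rw [h2, add_zero]
  rw [Polynomial.aeval_eq_sum_range' (PowerSeries.natDegree_trunc_lt _ k), Finset.mul_sum, map_sum]
  rw [Finset.sum_eq_single k]
  · rw [mul_smul_comm, map_smul, coreAB Y A hYA k k le_rfl, if_pos rfl, smul_eq_mul, mul_one,
      PowerSeries.coeff_trunc, if_pos (Nat.lt_succ_self k)]
  · intro i hi hne
    rw [mul_smul_comm, map_smul, coreAB Y A hYA k i (by
      simp only [Finset.mem_range] at hi; omega), if_neg hne, smul_eq_mul, mul_zero]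
  · intro hk
    exact absurd (Finset.self_mem_range_succ k) hk

theorem lagrange_key (τ : ℤ) (a : K) (ha : a ≠ 1) (Y : PowerSeries K)
    (hY0 : PowerSeries.constantCoeff Y = 0)
    (hY : Y * (1 - Y) ^ ((-τ).toNat) =
      PowerSeries.X * (1 - Y) ^ (τ.toNat) *
        (1 - PowerSeries.C a * (1 - Y)))
    (n : ℕ) (hn : 1 ≤ n) :
    (n : K) * PowerSeries.coeff n Y =
      ∑ i ∈ Finset.range (n + 1),
        (n.choose i : K) * (-a) ^ i * ((-1) ^ (n - 1) * (ichoose ((n : ℤ) * τ + i) (n - 1) : K)) := by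
  obtain ⟨k, rfl⟩ : ∃ k, n = k + 1 := ⟨n - 1, by omega⟩
  set V : (PowerSeries K)ˣ := Units.mkOfMulEqOne (1 - Y) (PowerSeries.invOfUnit (1 - Y) 1)
    (PowerSeries.mul_invOfUnit _ _ (by simp [hY0])) with hVdef
  have hVval : ((V : (PowerSeries K)ˣ) : PowerSeries K) = 1 - Y := rfl
  have hu0 : (1 : K) - a ≠ 0 := sub_ne_zero.mpr (Ne.symm ha)
  have hcU : PowerSeries.constantCoeff (1 - PowerSeries.C a * (1 - Y))
      = ((Units.mk0 ((1:K) - a) hu0 : Kˣ) : K) := by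
    simp [hY0]
  set U : (PowerSeries K)ˣ := Units.mkOfMulEqOne _ _
    (PowerSeries.mul_invOfUnit (1 - PowerSeries.C a * (1 - Y)) (Units.mk0 _ hu0) hcU) with hUdef
  have hUval : ((U : (PowerSeries K)ˣ) : PowerSeries K)
      = 1 - PowerSeries.C a * (1 - Y) := rfl
  set A : (PowerSeries K)ˣ := V ^ τ * U with hA
  have hYA : Y = PowerSeries.X * ((A : (PowerSeries K)ˣ) : PowerSeries K) := by
    have h1 : Y * ((V ^ ((-τ).toNat) : (PowerSeries K)ˣ) : PowerSeries K)
        = PowerSeries.X * ((V ^ (τ.toNat) : (PowerSeries K)ˣ) : PowerSeries K)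
          * ((U : (PowerSeries K)ˣ) : PowerSeries K) := by
      rw [Units.val_pow_eq_pow_val, Units.val_pow_eq_pow_val, hVval, hUval]; exact hY
    have h2 : Y = PowerSeries.X * ((V ^ (τ.toNat) : (PowerSeries K)ˣ) : PowerSeries K)
        * ((U : (PowerSeries K)ˣ) : PowerSeries K)
        * ((((V ^ ((-τ).toNat) : (PowerSeries K)ˣ))⁻¹ : (PowerSeries K)ˣ) : PowerSeries K) :=
      (Units.eq_mul_inv_iff_mul_eq _).mpr h1
    have hzp : (V ^ (τ.toNat) : (PowerSeries K)ˣ) * ((V ^ ((-τ).toNat) : (PowerSeries K)ˣ))⁻¹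
        = V ^ τ := by
      rw [← zpow_natCast V τ.toNat, ← zpow_natCast V (-τ).toNat, ← zpow_sub]
      congr 1
      omega
    rw [h2, hA, ← hzp]
    push_cast [Units.val_mul]
    ring
  have hd1 : ((k + 1 : ℕ) : K) * PowerSeries.coeff (k + 1) Y
      = PowerSeries.coeff k (PowerSeries.derivative K Y) := by
    rw [PowerSeries.coeff_derivative]; push_cast; ring
  have hABone : ((A⁻¹ ^ (k + 1) : (PowerSeries K)ˣ) : PowerSeries K)
      * ((A ^ (k + 1) : (PowerSeries K)ˣ) : PowerSeries K) = 1 := by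
    rw [← Units.val_mul, ← mul_pow, inv_mul_cancel, one_pow, Units.val_one]
  have hstart : PowerSeries.coeff k (PowerSeries.derivative K Y)
      = PowerSeries.coeff k (PowerSeries.derivative K Y
        * ((A⁻¹ ^ (k + 1) : (PowerSeries K)ˣ) : PowerSeries K)
        * ((A ^ (k + 1) : (PowerSeries K)ˣ) : PowerSeries K)) := by
    rw [mul_assoc, hABone, mul_one]
  have hApow : ((A ^ (k + 1) : (PowerSeries K)ˣ) : PowerSeries K)
      = ∑ i ∈ Finset.range (k + 2),
          PowerSeries.C ((-a) ^ i * ((k + 1).choose i : K))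
            * ((V ^ (((k + 1 : ℕ) : ℤ) * τ + i) : (PowerSeries K)ˣ) : PowerSeries K) := by
    have e1 : A ^ (k + 1) = (V ^ ((((k + 1) : ℕ) : ℤ) * τ) : (PowerSeries K)ˣ) * U ^ (k + 1) := by
      rw [hA, mul_pow]
      congr 1
      rw [← zpow_natCast (V ^ τ) (k + 1), ← zpow_mul, mul_comm]
    rw [e1, Units.val_mul, Units.val_pow_eq_pow_val, hUval]
    have e2 : ((1 : PowerSeries K) - PowerSeries.C a * (1 - Y)) ^ (k + 1)
        = ∑ i ∈ Finset.range (k + 2),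
            PowerSeries.C ((-a) ^ i * ((k + 1).choose i : K)) * (1 - Y) ^ i := by
      rw [sub_eq_add_neg, add_comm, add_pow]
      refine Finset.sum_congr rfl fun i hi => ?_
      rw [one_pow, mul_one]
      have e3 : (-(PowerSeries.C a * (1 - Y))) ^ i
          = PowerSeries.C ((-a) ^ i) * (1 - Y) ^ i := by
        rw [show -(PowerSeries.C a * (1 - Y)) = PowerSeries.C (-a) * (1 - Y) from by
          rw [map_neg, neg_mul], mul_pow, ← map_pow]
      rw [e3, show (((k + 1).choose i : ℕ) : PowerSeries K)
        = PowerSeries.C (((k + 1).choose i : ℕ) : K) from (map_natCast (PowerSeries.C (R := K)) _).symm,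
        map_mul]
      ring
    rw [e2, Finset.mul_sum]
    refine Finset.sum_congr rfl fun i hi => ?_
    have e4 : ((1 : PowerSeries K) - Y) ^ i = ((V ^ (i : ℤ) : (PowerSeries K)ˣ) : PowerSeries K) := by
      rw [zpow_natCast, Units.val_pow_eq_pow_val, hVval]
    rw [e4, show ((V ^ ((((k + 1) : ℕ) : ℤ) * τ) : (PowerSeries K)ˣ) : PowerSeries K)
        * (PowerSeries.C ((-a) ^ i * ((k + 1).choose i : K))
          * ((V ^ (i : ℤ) : (PowerSeries K)ˣ) : PowerSeries K))
        = PowerSeries.C ((-a) ^ i * ((k + 1).choose i : K))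
          * (((V ^ ((((k + 1) : ℕ) : ℤ) * τ) : (PowerSeries K)ˣ) : PowerSeries K)
            * ((V ^ (i : ℤ) : (PowerSeries K)ˣ) : PowerSeries K)) from by ring,
      ← Units.val_mul, ← zpow_add]
  rw [hd1, hstart, hApow, Finset.mul_sum, map_sum]
  refine Finset.sum_congr rfl fun i hi => ?_
  rw [show PowerSeries.derivative K Y * ((A⁻¹ ^ (k + 1) : (PowerSeries K)ˣ) : PowerSeries K)
      * (PowerSeries.C ((-a) ^ i * ((k + 1).choose i : K))
        * ((V ^ (((k + 1 : ℕ) : ℤ) * τ + i) : (PowerSeries K)ˣ) : PowerSeries K))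
      = PowerSeries.C ((-a) ^ i * ((k + 1).choose i : K))
        * (PowerSeries.derivative K Y * ((A⁻¹ ^ (k + 1) : (PowerSeries K)ˣ) : PowerSeries K)
          * ((V ^ (((k + 1 : ℕ) : ℤ) * τ + i) : (PowerSeries K)ˣ) : PowerSeries K)) from by ring,
    PowerSeries.coeff_C_mul, key_coeff Y A V hYA hVval _ k, coeff_oneSubXU_zpow]
  simp only [Nat.add_sub_cancel]
  ring

end LagrangeAux

/-- For the solution `Y(X)` (with `Y(0)=0`, coefficients in `ℚ[a]`) of
`Y = X (1-Y)^τ (1 - a(1-Y))` (stated with denominators cleared so as to make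
sense for any integer `τ`), one has
`1 - Y(X) = 1 + Σ_{n≥1} (X^n/n) Σ_{i≥0} (-1)^{n+i} C(n,i) C(nτ+i,n-1) a^i`. -/
theorem stmt12 (τ : ℤ) (Y : PowerSeries (Polynomial ℚ))
    (hY0 : PowerSeries.constantCoeff Y = 0)
    (hY : Y * (1 - Y) ^ ((-τ).toNat) =
      PowerSeries.X * (1 - Y) ^ (τ.toNat) *
        (1 - PowerSeries.C Polynomial.X * (1 - Y))) :
    1 - Y =
      PowerSeries.mk (fun n => if n = 0 then 1 else
        ∑ i ∈ Finset.range (n + 1),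
          Polynomial.C (((-1 : ℚ) ^ (n + i) * (ichoose (n : ℤ) i : ℚ) *
              (ichoose ((n : ℤ) * τ + i) (n - 1) : ℚ)) / n) *
            Polynomial.X ^ i) := by
  classical
  set F := RatFunc ℚ
  set ι : Polynomial ℚ →+* F := (algebraMap (Polynomial ℚ) F : Polynomial ℚ →+* F) with hι
  have hinj : Function.Injective ι := IsFractionRing.injective (Polynomial ℚ) F
  haveI : CharZero F := charZero_of_injective_algebraMap hinj
  have hmap_inj : Function.Injective (PowerSeries.map ι) := by
    intro f g h
    refine PowerSeries.ext fun n => hinj ?_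
    rw [← PowerSeries.coeff_map, ← PowerSeries.coeff_map, h]
  apply hmap_inj
  set a : F := ι Polynomial.X with hadef
  have ha : a ≠ 1 := by
    intro h
    have hX1 : (Polynomial.X : Polynomial ℚ) ≠ 1 := fun hx => by
      simpa [Polynomial.coeff_one] using congrArg (fun p => Polynomial.coeff p 1) hx
    refine hX1 (hinj ?_)
    rw [← hadef, h, map_one]
  set Z := PowerSeries.map ι Y with hZdef
  have hZ0 : PowerSeries.constantCoeff Z = 0 := by
    rw [hZdef, ← PowerSeries.coeff_zero_eq_constantCoeff_apply, PowerSeries.coeff_map,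
      PowerSeries.coeff_zero_eq_constantCoeff_apply, hY0, map_zero]
  have hZeq : Z * (1 - Z) ^ ((-τ).toNat) =
      PowerSeries.X * (1 - Z) ^ (τ.toNat) * (1 - PowerSeries.C a * (1 - Z)) := by
    have h := congrArg (PowerSeries.map ι) hY
    simpa only [map_mul, map_sub, map_pow, map_one, PowerSeries.map_X, PowerSeries.map_C,
      hZdef, hadef] using h
  have hC : ∀ c : ℚ, ι (Polynomial.C c) = (c : F) := by
    intro c
    have h := eq_ratCast (ι.comp (Polynomial.C : ℚ →+* Polynomial ℚ)) c
    rwa [RingHom.comp_apply] at h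
  have hne : ∀ k : ℕ, ((k + 1 : ℕ) : F) ≠ 0 := by
    intro k
    exact Nat.cast_ne_zero.mpr (Nat.succ_ne_zero k)
  ext n
  rcases n with _ | k
  · rw [map_sub, map_one]
    rw [PowerSeries.coeff_map, PowerSeries.coeff_mk, if_pos rfl, map_one]
    simp [hZ0, ← hZdef]
  · have hkey := lagrange_key τ a ha Z hZ0 hZeq (k + 1) (by omega)
    rw [map_sub, map_one]
    have hL : PowerSeries.coeff (k + 1) ((1 : PowerSeries F) - Z)
        = -PowerSeries.coeff (k + 1) Z := by
      rw [map_sub, PowerSeries.coeff_one, if_neg (Nat.succ_ne_zero k)]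
      ring
    rw [hL]
    conv_rhs => rw [PowerSeries.coeff_map, PowerSeries.coeff_mk]
    rw [if_neg (Nat.succ_ne_zero k), map_sum]
    refine mul_left_cancel₀ (hne k) ?_
    have hstep : ((k + 1 : ℕ) : F) * (-PowerSeries.coeff (k + 1) Z)
        = ∑ i ∈ Finset.range (k + 1 + 1),
            -(((k + 1).choose i : F) * (-a) ^ i *
              ((-1) ^ (k + 1 - 1) * (ichoose (((k + 1 : ℕ) : ℤ) * τ + i) (k + 1 - 1) : F))) := by
      rw [Finset.sum_neg_distrib, ← hkey]
      ring
    rw [hstep, Finset.mul_sum]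
    refine Finset.sum_congr rfl fun i hi => ?_
    rw [map_mul, map_pow, hC]
    have hXa : ι Polynomial.X = a := rfl
    rw [hXa]
    simp only [Nat.add_sub_cancel]
    rw [ichoose_natCast]
    push_cast
    have hsign : ((-1 : F)) ^ (k + 1 + i) = -((-1) ^ k * (-1) ^ i) := by
      rw [show k + 1 + i = (k + i) + 1 from by omega, pow_succ, pow_add]
      ring
    rw [hsign, neg_pow a i]
    have hk1 : ((k : F) + 1) ≠ 0 := by
      have h9 := hne k; push_cast at h9; exact h9
    rw [div_mul_eq_mul_div, mul_div_assoc', mul_div_cancel_left₀ _ hk1]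
    ring
end

section
/- Let a, b ≥ 1 and m₁ ≥ 1 be integers, and write x = (q^{m₁/2} + q^{-m₁/2})/2, z_{m₁} = q^{m₁/2} - q^{-m₁/2}. Then in the ring ℚ[q^{1/2}, q^{-1/2}], the quantum integer ratio {a b m₁}/{b m₁} := (q^{abm₁/2} - q^{-abm₁/2})/(q^{bm₁/2} - q^{-bm₁/2}) is congruent to a·x^{(a-1)b} modulo z_{m₁}². -/
open LaurentPolynomial

set_option linter.unusedSectionVars false

section Aux
variable {R : Type*} [CommRing R] {u w x z c : R}
  (huw : u * w = 1) (hc : 2 * c = 1) (hx : x = c * (u + w)) (hz : z = u - w)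

include huw hc hx hz

lemma aux_x_sq : x ^ 2 - 1 = c ^ 2 * z ^ 2 + (u * w - 1) := by
  subst hx hz; linear_combination u*w*(2*c+1)*hc

lemma aux_step2 (k : ℕ) : z ^ 2 ∣ x ^ (k + 2) - x ^ k := by
  have h := aux_x_sq huw hc hx hz
  refine ⟨x ^ k * c ^ 2, ?_⟩
  calc x ^ (k+2) - x ^ k = x ^ k * (x ^ 2 - 1) := by ring
    _ = x ^ k * (c ^ 2 * z ^ 2 + (u*w - 1)) := by rw [h]
    _ = z ^ 2 * (x ^ k * c ^ 2) := by rw [huw]; ring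

lemma aux_parity (s k : ℕ) : z ^ 2 ∣ x ^ (2 * s + k) - x ^ k := by
  induction s with
  | zero => simp
  | succ n ih =>
    have h2 := aux_step2 huw hc hx hz (2 * n + k)
    have : x ^ (2*(n+1)+k) - x ^ k = (x ^ (2*n+k+2) - x ^ (2*n+k)) + (x ^ (2*n+k) - x ^ k) := by
      ring_nf
    rw [this]
    exact dvd_add h2 ih

lemma aux_two_x : u + w = 2 * x := by rw [hx, ← mul_assoc, hc, one_mul]

lemma aux_sum : ∀ n : ℕ, z ^ 2 ∣ u ^ n + w ^ n - 2 * x ^ n := by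
  have key : ∀ n : ℕ, (z ^ 2 ∣ u ^ n + w ^ n - 2 * x ^ n) ∧
      (z ^ 2 ∣ u ^ (n+1) + w ^ (n+1) - 2 * x ^ (n+1)) := by
    intro n
    induction n with
    | zero =>
      constructor
      · refine ⟨0, ?_⟩; ring
      · refine ⟨0, ?_⟩
        simp only [pow_one, mul_zero]
        linear_combination (-2)*hx - (u+w)*hc
    | succ n ih =>
      refine ⟨ih.2, ?_⟩
      obtain ⟨p, hp⟩ := ih.1
      obtain ⟨q, hq⟩ := ih.2
      have htx := aux_two_x huw hc hx hz
      refine ⟨(u + w) * q - p + 2 * c ^ 2 * x ^ n, ?_⟩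
      have hxsq := aux_x_sq huw hc hx hz
      calc u ^ (n+2) + w ^ (n+2) - 2 * x ^ (n+2)
          = (u + w) * (u ^ (n+1) + w ^ (n+1) - 2 * x ^ (n+1))
            - (u * w) * (u ^ n + w ^ n - 2 * x ^ n)
            + ((u + w) * 2 * x ^ (n+1) - (u*w) * 2 * x ^ n - 2 * x ^ (n+2)) := by ring
        _ = (u + w) * (z ^ 2 * q) - z ^ 2 * p
            + (2 * x ^ n * (x ^ 2 - 1)) := by rw [hp, hq, htx, huw]; ring
        _ = (u + w) * (z ^ 2 * q) - z ^ 2 * p + 2 * x ^ n * (c ^ 2 * z ^ 2) := by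
            rw [hxsq, huw]; ring
        _ = z ^ 2 * ((u + w) * q - p + 2 * c ^ 2 * x ^ n) := by ring
  exact fun n => (key n).1

lemma aux_pair (p q : ℕ) : z ^ 2 ∣ u ^ p * w ^ q + u ^ q * w ^ p - 2 * x ^ (p + q) := by
  have main : ∀ p q : ℕ, q ≤ p → z ^ 2 ∣ u ^ p * w ^ q + u ^ q * w ^ p - 2 * x ^ (p + q) := by
    intro p q hqp
    have hd : p = (p - q) + q := by omega
    have huwq : (u * w) ^ q = 1 := by rw [huw, one_pow]
    have hu : u ^ p = u ^ (p - q) * u ^ q := by rw [← pow_add, Nat.sub_add_cancel hqp]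
    have hw : w ^ p = w ^ (p - q) * w ^ q := by rw [← pow_add, Nat.sub_add_cancel hqp]
    have h1 : u ^ p * w ^ q + u ^ q * w ^ p = u ^ (p - q) + w ^ (p - q) := by
      calc u ^ p * w ^ q + u ^ q * w ^ p
          = (u ^ (p-q) + w ^ (p-q)) * (u * w) ^ q := by rw [hu, hw]; ring
        _ = u ^ (p - q) + w ^ (p - q) := by rw [huwq, mul_one]
    rw [h1]
    have h2 := aux_sum huw hc hx hz (p - q)
    have h3 := aux_parity huw hc hx hz q (p - q)
    have hpq : p + q = 2 * q + (p - q) := by omega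
    rw [hpq]
    have : u ^ (p-q) + w ^ (p-q) - 2 * x ^ (2*q + (p-q)) =
        (u ^ (p-q) + w ^ (p-q) - 2 * x ^ (p-q)) - 2 * (x ^ (2*q + (p-q)) - x ^ (p-q)) := by ring
    rw [this]
    exact dvd_sub h2 (Dvd.dvd.mul_left h3 2)
  rcases le_total q p with h | h
  · exact main p q h
  · have := main q p h
    rw [add_comm q p] at this
    convert this using 2
    ring
end Aux

/-- In `ℚ[q^{±1/2}]` (Laurent polynomials, where `T 1` represents `q^{1/2}`),
the quantum-integer ratio `{a b m₁}/{b m₁}`, i.e. the unique `r` with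
`r · {b m₁} = {a b m₁}`, is congruent to `a · x^{(a-1)b}` modulo `z_{m₁}²`,
where `x = (q^{m₁/2} + q^{-m₁/2})/2` and `z_{m₁} = q^{m₁/2} - q^{-m₁/2}`. -/
theorem stmt13 (a b m₁ : ℕ) (ha : 1 ≤ a) (hb : 1 ≤ b) (hm : 1 ≤ m₁)
    (r : LaurentPolynomial ℚ)
    (hr : r * (T ((b * m₁ : ℕ) : ℤ) - T (-((b * m₁ : ℕ) : ℤ))) =
      T ((a * b * m₁ : ℕ) : ℤ) - T (-((a * b * m₁ : ℕ) : ℤ))) :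
    (T ((m₁ : ℕ) : ℤ) - T (-((m₁ : ℕ) : ℤ))) ^ 2 ∣
      r - (a : LaurentPolynomial ℚ) *
        (LaurentPolynomial.C (1 / 2 : ℚ) *
          (T ((m₁ : ℕ) : ℤ) + T (-((m₁ : ℕ) : ℤ)))) ^ ((a - 1) * b) := by
  set u : LaurentPolynomial ℚ := T ((m₁ : ℕ) : ℤ) with hu
  set w : LaurentPolynomial ℚ := T (-((m₁ : ℕ) : ℤ)) with hw
  set c : LaurentPolynomial ℚ := C (1 / 2 : ℚ) with hcdef
  set x : LaurentPolynomial ℚ := c * (u + w) with hx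
  set z : LaurentPolynomial ℚ := u - w with hz
  have huw : u * w = 1 := by rw [hu, hw, ← T_add, add_neg_cancel, T_zero]
  have hc : 2 * c = 1 := by
    rw [hcdef, two_mul, ← map_add, show (1/2 + 1/2 : ℚ) = 1 by norm_num, map_one]
  -- rewrite hr in terms of powers of u and w
  have hub : T ((b * m₁ : ℕ) : ℤ) = u ^ b := by
    rw [hu, T_pow]; norm_cast
  have hwb : T (-((b * m₁ : ℕ) : ℤ)) = w ^ b := by
    rw [hw, T_pow]; push_cast; ring_nf
  have huab : T ((a * b * m₁ : ℕ) : ℤ) = (u ^ b) ^ a := by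
    rw [hu, ← pow_mul, T_pow]; push_cast; ring_nf
  have hwab : T (-((a * b * m₁ : ℕ) : ℤ)) = (w ^ b) ^ a := by
    rw [hw, ← pow_mul, T_pow]; push_cast; ring_nf
  rw [hub, hwb, huab, hwab] at hr
  -- the divisor is nonzero
  have hbm : u ^ b - w ^ b ≠ 0 := by
    rw [hub.symm, hwb.symm]
    intro hcon
    have h2 := sub_eq_zero.mp hcon
    rw [show (T ((b * m₁ : ℕ) : ℤ) : LaurentPolynomial ℚ)
        = AddMonoidAlgebra.single ((b * m₁ : ℕ) : ℤ) 1 from rfl,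
      show (T (-((b * m₁ : ℕ) : ℤ)) : LaurentPolynomial ℚ)
        = AddMonoidAlgebra.single (-((b * m₁ : ℕ) : ℤ)) 1 from rfl,
      AddMonoidAlgebra.single_inj] at h2
    have hbm1 : 0 < b * m₁ := Nat.mul_pos hb hm
    simp at h2
    omega
  -- identify r with the geometric sum
  have hgeom := geom_sum₂_mul (u ^ b) (w ^ b) a
  have hrval : r = ∑ i ∈ Finset.range a, (u ^ b) ^ i * (w ^ b) ^ (a - 1 - i) :=
    mul_right_cancel₀ hbm (hr.trans hgeom.symm)
  -- main divisibility
  set N : ℕ := (a - 1) * b with hN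
  have key : ∀ i ∈ Finset.range a,
      z ^ 2 ∣ ((u ^ b) ^ i * (w ^ b) ^ (a - 1 - i)
        + (u ^ b) ^ (a - 1 - i) * (w ^ b) ^ (a - 1 - (a - 1 - i)) - 2 * x ^ N) := by
    intro i hi
    rw [Finset.mem_range] at hi
    have h1 : a - 1 - (a - 1 - i) = i := by omega
    rw [h1, ← pow_mul, ← pow_mul, ← pow_mul, ← pow_mul]
    have h2 := aux_pair huw hc hx hz (b * i) (b * (a - 1 - i))
    have h3 : b * i + b * (a - 1 - i) = N := by
      rw [hN, ← mul_add, show i + (a - 1 - i) = a - 1 from by omega, mul_comm]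
    rwa [h3] at h2
  have hdvd2 : z ^ 2 ∣ 2 * (r - (a : LaurentPolynomial ℚ) * x ^ N) := by
    have hsum : 2 * (r - (a : LaurentPolynomial ℚ) * x ^ N)
        = ∑ i ∈ Finset.range a, ((u ^ b) ^ i * (w ^ b) ^ (a - 1 - i)
          + (u ^ b) ^ (a - 1 - i) * (w ^ b) ^ (a - 1 - (a - 1 - i)) - 2 * x ^ N) := by
      rw [Finset.sum_sub_distrib, Finset.sum_add_distrib]
      rw [Finset.sum_range_reflect
        (fun i => (u ^ b) ^ i * (w ^ b) ^ (a - 1 - i)) a]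
      rw [← hrval]
      rw [Finset.sum_const, Finset.card_range]
      push_cast
      ring
    rw [hsum]
    exact Finset.dvd_sum key
  obtain ⟨p, hp⟩ := hdvd2
  refine ⟨c * p, ?_⟩
  calc r - (a : LaurentPolynomial ℚ) * x ^ N
      = c * (2 * (r - (a : LaurentPolynomial ℚ) * x ^ N)) := by
        rw [← mul_assoc, mul_comm c 2, hc, one_mul]
    _ = c * (z ^ 2 * p) := by rw [hp]
    _ = z ^ 2 * (c * p) := by ring
end

section
/- Let p be a prime, α ≥ 1, and m = p^α a with p ∤ a, and let k ≥ 1 be any integer. Then p^{2α} divides (-1)^{(k+1)m} C(km-1, m-1) - (-1)^{(k+1)m/p} C(km/p - 1, m/p - 1). -/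
open Finset

section Hidden


lemma factProd (b : ℕ) : ∀ t : ℕ,
    Nat.factorial b * ∏ j ∈ Finset.Ico 1 (t+1), (b + j) = Nat.factorial (b + t) := by
  intro t
  induction t with
  | zero => simp
  | succ t ih =>
      rw [Finset.prod_Ico_succ_top (by omega), ← mul_assoc, ih]
      rw [show b + (t+1) = (b+t) + 1 from rfl, Nat.factorial_succ]
      ring

lemma factProd' (b m : ℕ) (hm : 1 ≤ m) :
    Nat.factorial b * ∏ j ∈ Finset.Ico 1 m, (b + j) = Nat.factorial (b + m - 1) := by
  obtain ⟨t, rfl⟩ : ∃ t, m = t + 1 := ⟨m - 1, by omega⟩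
  rw [factProd b t]
  congr 1 <;> omega

lemma kmul (k m : ℕ) (hk : 1 ≤ k) : (k-1)*m + m = k*m := by
  cases k with
  | zero => omega
  | succ k => simp only [Nat.succ_sub_one]; ring

lemma filterEq (p n m : ℕ) (hp : 0 < p) (hm : m = p * n) :
    (Finset.Ico 1 m).filter (fun j => p ∣ j) = (Finset.Ico 1 n).image (fun i => p * i) := by
  ext j
  simp only [Finset.mem_filter, Finset.mem_Ico, Finset.mem_image]
  constructor
  · rintro ⟨⟨h1, h2⟩, i, rfl⟩
    refine ⟨i, ⟨?_, ?_⟩, rfl⟩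
    · rcases Nat.eq_zero_or_pos i with h | h
      · subst h; simp at h1
      · exact h
    · subst hm; exact Nat.lt_of_mul_lt_mul_left h2
  · rintro ⟨i, ⟨h1, h2⟩, rfl⟩
    subst hm
    exact ⟨⟨Nat.mul_pos hp h1, (Nat.mul_lt_mul_left hp).2 h2⟩, ⟨i, rfl⟩⟩

lemma step1 (p : ℕ) (hp : p.Prime) (n k m : ℕ) (hn : 1 ≤ n) (hk : 1 ≤ k) (hm : m = p * n) :
    (∏ j ∈ (Finset.Ico 1 m).filter (fun j => ¬ p ∣ j), j) * (k*m - 1).choose (m-1)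
      = (k*n - 1).choose (n-1) * ∏ j ∈ (Finset.Ico 1 m).filter (fun j => ¬ p ∣ j), ((k-1)*m + j) := by
  have hp2 := hp.two_le
  have hm1 : 1 ≤ m := by subst hm; nlinarith
  set S := (Finset.Ico 1 m).filter (fun j => ¬ p ∣ j) with hS
  set F := ∏ j ∈ S, j with hF
  set A := ∏ j ∈ S, ((k-1)*m + j) with hA
  set Q := ∏ i ∈ Finset.Ico 1 n, ((k-1)*n + i) with hQ
  set C := (k*m - 1).choose (m-1) with hC0
  set C' := (k*n - 1).choose (n-1) with hC0'
  -- products over multiples of p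
  have himg : ∀ c : ℕ, ∏ j ∈ (Finset.Ico 1 m).filter (fun j => p ∣ j), (c * m + j)
      = p ^ (n-1) * ∏ i ∈ Finset.Ico 1 n, (c * n + i) := by
    intro c
    rw [filterEq p n m hp.pos hm, Finset.prod_image (by
      intro x _ y _ h; exact Nat.eq_of_mul_eq_mul_left hp.pos h)]
    have : ∀ i ∈ Finset.Ico 1 n, c * m + p * i = p * (c * n + i) := by
      intro i _; subst hm; ring
    rw [Finset.prod_congr rfl this, Finset.prod_mul_distrib, Finset.prod_const, Nat.card_Ico]
  -- split of the big ascending product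
  have hsplit : p ^ (n-1) * Q * A = ∏ j ∈ Finset.Ico 1 m, ((k-1)*m + j) := by
    rw [← Finset.prod_filter_mul_prod_filter_not (Finset.Ico 1 m) (fun j => p ∣ j)
        (fun j => (k-1)*m + j)]
    rw [himg (k-1)]
  -- split of the factorial
  have hid : p ^ (n-1) * Nat.factorial (n-1) * F = Nat.factorial (m-1) := by
    have h1 : (Nat.factorial 0) * ∏ j ∈ Finset.Ico 1 m, (0 + j) = Nat.factorial (0 + m - 1) :=
      factProd' 0 m hm1
    simp only [Nat.factorial_zero, one_mul, zero_add] at h1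
    rw [← h1, ← Finset.prod_filter_mul_prod_filter_not (Finset.Ico 1 m) (fun j => p ∣ j)
        (fun j => j)]
    have h2 := himg 0
    simp only [zero_mul, zero_add] at h2
    have h3 : (Nat.factorial 0) * ∏ i ∈ Finset.Ico 1 n, (0 + i) = Nat.factorial (0 + n - 1) :=
      factProd' 0 n hn
    simp only [Nat.factorial_zero, one_mul, zero_add] at h3
    rw [h2, h3]
  -- ascending products as factorials
  have hPm : Nat.factorial ((k-1)*m) * (p ^ (n-1) * Q * A) = Nat.factorial (k*m - 1) := by
    rw [hsplit, factProd' _ m hm1]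
    congr 1
    have := kmul k m hk
    omega
  have hQn : Nat.factorial ((k-1)*n) * Q = Nat.factorial (k*n - 1) := by
    rw [hQ, factProd' _ n hn]
    congr 1
    have := kmul k n hk
    omega
  -- choose identities
  have hCm : C * Nat.factorial (m-1) * Nat.factorial ((k-1)*m) = Nat.factorial (k*m - 1) := by
    have hle : m - 1 ≤ k*m - 1 := by
      have : m ≤ k * m := Nat.le_mul_of_pos_left m hk
      omega
    have := Nat.choose_mul_factorial_mul_factorial hle
    rw [show k*m - 1 - (m-1) = (k-1)*m from by have h4 := kmul k m hk; omega] at this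
    exact this
  have hCn : C' * Nat.factorial (n-1) * Nat.factorial ((k-1)*n) = Nat.factorial (k*n - 1) := by
    have hle : n - 1 ≤ k*n - 1 := by
      have : n ≤ k * n := Nat.le_mul_of_pos_left n hk
      omega
    have := Nat.choose_mul_factorial_mul_factorial hle
    rw [show k*n - 1 - (n-1) = (k-1)*n from by have h4 := kmul k n hk; omega] at this
    exact this
  -- cancellation
  have hQpos : 0 < Q := Finset.prod_pos (by intro i hi; simp [Finset.mem_Ico] at hi; omega)
  have hMpos : 0 < p ^ (n-1) * Nat.factorial (n-1) * Nat.factorial ((k-1)*m)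
      * Nat.factorial ((k-1)*n) * Q := by positivity
  apply Nat.eq_of_mul_eq_mul_left hMpos
  calc p ^ (n-1) * Nat.factorial (n-1) * Nat.factorial ((k-1)*m) * Nat.factorial ((k-1)*n) * Q
        * (F * C)
      = (C * (p ^ (n-1) * Nat.factorial (n-1) * F) * Nat.factorial ((k-1)*m))
        * (Nat.factorial ((k-1)*n) * Q) := by ring
    _ = (C * Nat.factorial (m-1) * Nat.factorial ((k-1)*m)) * Nat.factorial (k*n-1) := by
        rw [hid, hQn]
    _ = Nat.factorial (k*m-1) * Nat.factorial (k*n-1) := by rw [hCm]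
    _ = (C' * Nat.factorial (n-1) * Nat.factorial ((k-1)*n))
        * (Nat.factorial ((k-1)*m) * (p ^ (n-1) * Q * A)) := by rw [hCn, hPm]; ring
    _ = p ^ (n-1) * Nat.factorial (n-1) * Nat.factorial ((k-1)*m) * Nat.factorial ((k-1)*n) * Q
        * (C' * A) := by ring


lemma pairing (p N m c k : ℕ) (hk : 1 ≤ k) (hc : c = (k-1)*m)
    (hcop : ∀ j : ℕ, ¬ p ∣ j → Nat.Coprime j N)
    (hm2 : ((m : ZMod N))^2 = 0) (hpm : p ∣ m)
    (T : Finset ℕ) (hT1 : ∀ j ∈ T, 1 ≤ j ∧ j < m ∧ ¬ p ∣ j)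
    (hT2 : ∀ j ∈ T, m - j ∈ T) (hT3 : ∀ j ∈ T, m - j ≠ j) :
    (∏ j ∈ T, ((c + j : ℕ) : ZMod N)) = ∏ j ∈ T, ((j : ℕ) : ZMod N) := by
  classical
  have hpc : p ∣ c := hc ▸ Dvd.dvd.mul_left hpm (k-1)
  have hcopc : ∀ j, ¬ p ∣ j → Nat.Coprime (c + j) N := by
    intro j hj
    refine hcop _ ?_
    intro hd
    exact hj ((Nat.dvd_add_right hpc).mp hd)
  set f : ℕ → (ZMod N)ˣ := fun j =>
    if h : j ∈ T then
      ZMod.unitOfCoprime (c + j) (hcopc j (hT1 j h).2.2) *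
        (ZMod.unitOfCoprime j (hcop j (hT1 j h).2.2))⁻¹
    else 1 with hf
  have hval : ∀ j ∈ T, ((f j : ZMod N)) * (j : ZMod N) = ((c + j : ℕ) : ZMod N) := by
    intro j hj
    rw [hf]
    simp only [dif_pos hj, Units.val_mul]
    rw [mul_assoc, ← ZMod.coe_unitOfCoprime j (hcop j (hT1 j hj).2.2), Units.inv_mul, mul_one,
      ZMod.coe_unitOfCoprime]
  have hprod : ∏ j ∈ T, f j = 1 := by
    apply Finset.prod_involution (fun j _ => m - j)
    · intro j hj
      have hjm := hT2 j hj
      rw [hf]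
      simp only [dif_pos hj, dif_pos hjm]
      set u1 := ZMod.unitOfCoprime (c + j) (hcopc j (hT1 j hj).2.2)
      set u2 := ZMod.unitOfCoprime j (hcop j (hT1 j hj).2.2)
      set u3 := ZMod.unitOfCoprime (c + (m - j)) (hcopc (m-j) (hT1 (m-j) hjm).2.2)
      set u4 := ZMod.unitOfCoprime (m - j) (hcop (m-j) (hT1 (m-j) hjm).2.2)
      have key : u1 * u3 = u2 * u4 := by
        apply Units.ext
        simp only [Units.val_mul, ZMod.coe_unitOfCoprime, u1, u2, u3, u4]
        have hjlt : j ≤ m := le_of_lt (hT1 j hj).2.1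
        push_cast [Nat.cast_sub hjlt, hc, Nat.cast_sub hk]
        linear_combination ((k : ZMod N) * (k : ZMod N) - (k : ZMod N)) * hm2
      calc u1 * u2⁻¹ * (u3 * u4⁻¹) = (u1 * u3) * (u2⁻¹ * u4⁻¹) := by rw [mul_mul_mul_comm]
        _ = (u1 * u3) * (u2 * u4)⁻¹ := by rw [mul_inv_rev, mul_comm u2⁻¹ u4⁻¹]
        _ = 1 := by rw [key]; group
    · intro j hj _; exact hT3 j hj
    · intro j hj; exact hT2 j hj
    · intro j hj
      have := (hT1 j hj).2.1
      omega
  have : ∀ j ∈ T, ((c + j : ℕ) : ZMod N) = ((f j : ZMod N)) * (j : ZMod N) := by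
    intro j hj; rw [hval j hj]
  have h1 : (∏ x ∈ T, ((f x) : ZMod N)) = ((∏ x ∈ T, f x : (ZMod N)ˣ) : ZMod N) := by
    simpa using (map_prod (Units.coeHom (ZMod N)) f T).symm
  rw [Finset.prod_congr rfl this, Finset.prod_mul_distrib, h1, hprod, Units.val_one, one_mul]

end Hidden

theorem stmt16 (p : ℕ) (hp : p.Prime) (α a : ℕ) (hα : 1 ≤ α) (ha : ¬ p ∣ a)
    (k : ℕ) (hk : 1 ≤ k) (m : ℕ) (hm : m = p ^ α * a) :
    ((p : ℤ) ^ (2 * α)) ∣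
      (-1 : ℤ) ^ ((k + 1) * m) * ((k * m - 1).choose (m - 1) : ℤ) -
        (-1 : ℤ) ^ ((k + 1) * (m / p)) * ((k * m / p - 1).choose (m / p - 1) : ℤ) := by
  have hp2 := hp.two_le
  have ha1 : 1 ≤ a := by
    rcases Nat.eq_zero_or_pos a with h | h
    · exact absurd (h ▸ dvd_zero p) ha
    · exact h
  set n := p ^ (α - 1) * a with hn
  have hn1 : 1 ≤ n := by
    have h0 : 0 < p ^ (α - 1) * a := Nat.mul_pos (Nat.pow_pos hp.pos) ha1
    omega
  have hmn : m = p * n := by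
    rw [hm, hn, ← mul_assoc, ← pow_succ']
    congr 2
    omega
  have hm1 : 1 ≤ m := by rw [hmn]; nlinarith
  have hmdiv : m / p = n := by rw [hmn, Nat.mul_div_cancel_left _ hp.pos]
  have hkmdiv : k * m / p = k * n := by
    rw [hmn, mul_comm p n, ← mul_assoc, Nat.mul_div_cancel _ hp.pos]
  rw [hmdiv, hkmdiv]
  -- the ZMod (p ^ (2 * α)) congruence
  have hm2 : ((m : ZMod (p ^ (2 * α))))^2 = 0 := by
    have h1 : m^2 = p^(2*α) * a^2 := by
      rw [hm, mul_pow, ← pow_mul, mul_comm α 2]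
    calc ((m : ZMod (p ^ (2 * α))))^2 = ((m^2 : ℕ) : ZMod (p ^ (2*α))) := by push_cast; ring
      _ = ((p^(2*α) * a^2 : ℕ) : ZMod (p ^ (2*α))) := by rw [h1]
      _ = 0 := by rw [Nat.cast_mul, ZMod.natCast_self, zero_mul]
  have hcop : ∀ j : ℕ, ¬ p ∣ j → Nat.Coprime j (p ^ (2*α)) := fun j hj =>
    Nat.Coprime.pow_right _ ((hp.coprime_iff_not_dvd.mpr hj).symm)
  set S := (Finset.Ico 1 m).filter (fun j => ¬ p ∣ j) with hSdef
  have hS1 : ∀ j ∈ S, 1 ≤ j ∧ j < m ∧ ¬ p ∣ j := by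
    intro j hj
    rw [hSdef, Finset.mem_filter, Finset.mem_Ico] at hj
    tauto
  have hpm : p ∣ m := ⟨n, hmn⟩
  have hSmem : ∀ j ∈ S, m - j ∈ S := by
    intro j hj
    obtain ⟨h1, h2, h3⟩ := hS1 j hj
    rw [hSdef, Finset.mem_filter, Finset.mem_Ico]
    refine ⟨⟨by omega, by omega⟩, ?_⟩
    intro hd
    apply h3
    have : m - (m - j) = j := by omega
    exact this ▸ Nat.dvd_sub hpm hd
  -- key congruence between the two unit-part products
  have hAF : (∏ j ∈ S, (((k-1)*m + j : ℕ) : ZMod (p ^ (2*α))))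
      = (-1)^((k+1)*(m+n)) * ∏ j ∈ S, ((j : ℕ) : ZMod (p ^ (2*α))) := by
    by_cases hcase : p = 2 ∧ α = 1
    · obtain ⟨hp2', hα1⟩ := hcase
      have hna : n = a := by rw [hn, hα1]; simp
      have hodd_n : ¬ 2 ∣ n := by rw [hna, ← hp2']; exact ha
      have hm2a : m = 2*n := by rw [hmn, hp2']
      have hnS : n ∈ S := by
        rw [hSdef, Finset.mem_filter, Finset.mem_Ico]
        refine ⟨⟨hn1, by omega⟩, ?_⟩
        rw [hp2']
        exact hodd_n
      have hE1 : ∀ j ∈ S.erase n, 1 ≤ j ∧ j < m ∧ ¬ p ∣ j := fun j hj =>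
        hS1 j (Finset.mem_of_mem_erase hj)
      have hE2 : ∀ j ∈ S.erase n, m - j ∈ S.erase n := by
        intro j hj
        have hjS := Finset.mem_of_mem_erase hj
        have hjn := Finset.ne_of_mem_erase hj
        refine Finset.mem_erase.mpr ⟨?_, hSmem j hjS⟩
        intro hmj
        obtain ⟨h1, h2, _⟩ := hS1 j hjS
        exact hjn (by omega)
      have hE3 : ∀ j ∈ S.erase n, m - j ≠ j := by
        intro j hj hfix
        obtain ⟨h1, h2, _⟩ := hE1 j hj
        exact Finset.ne_of_mem_erase hj (by omega)
      have hpairE := pairing p (p^(2*α)) m ((k-1)*m) k hk rfl hcop hm2 hpm (S.erase n) hE1 hE2 hE3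
      rw [← Finset.mul_prod_erase S _ hnS,
        ← Finset.mul_prod_erase S (fun j => ((j:ℕ) : ZMod (p^(2*α)))) hnS, hpairE]
      suffices hsuf : (((k-1)*m + n : ℕ) : ZMod (p^(2*α)))
          = (-1)^((k+1)*(m+n)) * ((n : ℕ) : ZMod (p^(2*α))) by
        rw [hsuf]; ring
      obtain ⟨k', rfl⟩ : ∃ k', k = k' + 1 := ⟨k-1, by omega⟩
      have harith : (k'+1-1)*m + n = (2*k'+1)*n := by
        simp only [Nat.add_sub_cancel]
        rw [hm2a]; ring
      rw [harith]
      have hN4 : p^(2*α) = 4 := by rw [hp2', hα1]; norm_num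
      rw [hN4]
      have hmn3 : m + n = 3*n := by omega
      rw [hmn3]
      rcases Nat.even_or_odd k' with ⟨t, ht⟩ | ⟨t, ht⟩
      · rw [ht]
        have heE : Even ((t+t+1+1)*(3*n)) := Even.mul_right ⟨t+1, by ring⟩ _
        rw [heE.neg_one_pow, one_mul, show (2*(t+t)+1)*n = 4*(t*n)+n from by ring]
        push_cast
        rw [show ((4:ZMod 4)) = 0 from by decide]
        ring
      · rw [ht]
        have hoddn : Odd n := Nat.odd_iff.mpr (by omega)
        have hoddE : Odd ((2*t+1+1+1)*(3*n)) := Odd.mul ⟨t+1, by ring⟩ (Odd.mul ⟨1, rfl⟩ hoddn)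
        rw [hoddE.neg_one_pow, show (2*(2*t+1)+1)*n = 4*(t*n)+3*n from by ring]
        push_cast
        rw [show ((4:ZMod 4)) = 0 from by decide, show ((3:ZMod 4)) = -1 from by decide]
        ring
    · -- no fixed point: the product pairing is complete and the sign is +1
      have hT3 : ∀ j ∈ S, m - j ≠ j := by
        intro j hj hfix
        obtain ⟨h1, h2, h3⟩ := hS1 j hj
        have hm2j : m = 2 * j := by omega
        rcases eq_or_ne p 2 with hp2' | hp2'
        · -- then α ≥ 2, so 4 ∣ m = 2j hence 2 ∣ j
          have hα2 : 2 ≤ α := by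
            rcases Nat.lt_or_ge α 2 with h | h
            · exact absurd ⟨hp2', by omega⟩ hcase
            · exact h
          have h4 : p^2 ∣ m := hm ▸ Dvd.dvd.mul_right (pow_dvd_pow p hα2) a
          rw [hp2'] at h4 h3
          obtain ⟨t, ht⟩ := h4
          exact h3 ⟨t, by omega⟩
        · rcases (Nat.Prime.dvd_mul hp).mp (hm2j ▸ hpm) with h | h
          · exact hp2' ((Nat.prime_dvd_prime_iff_eq hp Nat.prime_two).mp h)
          · exact h3 h
      have heven : Even ((k+1)*(m+n)) := by
        apply Even.mul_left
        rcases eq_or_ne p 2 with hp2' | hp2'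
        · have hα2 : 2 ≤ α := by
            rcases Nat.lt_or_ge α 2 with h | h
            · exact absurd ⟨hp2', by omega⟩ hcase
            · exact h
          have hem : 2 ∣ m := hmn ▸ Dvd.dvd.mul_right (hp2' ▸ dvd_refl p) n
          have hen : 2 ∣ n := by
            rw [hn, ← hp2']
            exact Dvd.dvd.mul_right (dvd_pow_self p (by omega)) a
          obtain ⟨t1, ht1⟩ := hem; obtain ⟨t2, ht2⟩ := hen
          exact ⟨t1 + t2, by omega⟩
        · have hodd : Odd p := hp.odd_of_ne_two hp2'
          obtain ⟨t, ht⟩ := hodd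
          exact ⟨(t+1)*n, by rw [hmn]; rw [ht]; ring⟩
      rw [pairing p (p^(2*α)) m ((k-1)*m) k hk rfl hcop hm2 hpm S hS1 hSmem hT3,
        Even.neg_one_pow heven, one_mul]
  -- step 1 identity, cast into ZMod
  have h1 := step1 p hp n k m hn1 hk hmn
  have h1c : (∏ j ∈ S, ((j:ℕ) : ZMod (p ^ (2*α)))) * ((k*m-1).choose (m-1) : ZMod (p ^ (2*α)))
      = ((k*n-1).choose (n-1) : ZMod (p ^ (2*α)))
        * ∏ j ∈ S, (((k-1)*m + j : ℕ) : ZMod (p ^ (2*α))) := by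
    have := congrArg (Nat.cast : ℕ → ZMod (p ^ (2*α))) h1
    rw [Nat.cast_mul, Nat.cast_mul, Nat.cast_prod, Nat.cast_prod] at this
    exact this
  have hFunit : IsUnit (∏ j ∈ S, ((j:ℕ) : ZMod (p ^ (2*α)))) := by
    rw [← Nat.cast_prod]
    rw [ZMod.isUnit_iff_coprime]
    apply Nat.Coprime.prod_left
    intro j hj
    exact hcop j (hS1 j hj).2.2
  have hmain : ((k*m-1).choose (m-1) : ZMod (p ^ (2*α)))
      = (-1)^((k+1)*(m+n)) * ((k*n-1).choose (n-1) : ZMod (p ^ (2*α))) := by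
    apply hFunit.mul_left_cancel
    rw [h1c, hAF]
    ring
  -- conclude
  have hNcast : ((p:ℤ)^(2*α)) = ((p^(2*α) : ℕ) : ℤ) := by push_cast; ring
  rw [hNcast, ← ZMod.intCast_zmod_eq_zero_iff_dvd]
  push_cast
  have he2 : Even (2*((k+1)*m)) := ⟨(k+1)*m, by ring⟩
  rw [hmain, ← mul_assoc, ← pow_add,
    show (k+1)*m + (k+1)*(m+n) = (k+1)*n + 2*((k+1)*m) from by ring,
    pow_add, he2.neg_one_pow, mul_one, sub_self]
end

section
/- For integers p ≥ 2 and every r ≥ 1, the numbers b⁻_{K_p,r} = -(1/r²) Σ_{d|r} μ(r/d) (-1)^{d+1} C(2d-1, d-1) and b⁺_{K_p,r} = (1/r²) Σ_{d|r} μ(r/d) (-1)^d C((2p+2)d - 1, d-1) are integers. -/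
open Finset Nat

-- Lemma A: c! * ∏_{i∈Ico 1 n} (c+i) = (c + (n-1))!
lemma factAux (c : ℕ) : ∀ n : ℕ, 1 ≤ n → c ! * ∏ i ∈ Ico 1 n, (c + i) = (c + (n - 1))! := by
  intro n
  induction n with
  | zero => omega
  | succ n ih =>
    intro _
    rcases Nat.eq_zero_or_pos n with rfl | hn
    · simp
    · rw [Finset.prod_Ico_succ_top hn, ← mul_assoc, ih hn]
      have h1 : c + (n + 1 - 1) = (c + (n - 1)) + 1 := by omega
      rw [h1, Nat.factorial_succ]
      have h2 : c + n = c + (n - 1) + 1 := by omega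
      rw [h2]; ring

-- choose * factorial = product
lemma chooseProd (s n : ℕ) (hs : 1 ≤ s) (hn : 1 ≤ n) :
    (s * n - 1).choose (n - 1) * (n - 1)! = ∏ i ∈ Ico 1 n, ((s - 1) * n + i) := by
  have hsn : s * n = (s - 1) * n + n := by
    have := Nat.sub_one_mul s n
    have h2 : n ≤ s * n := Nat.le_mul_of_pos_left n hs
    omega
  have hle : n - 1 ≤ s * n - 1 := by omega
  have h := Nat.choose_mul_factorial_mul_factorial hle
  have h3 : s * n - 1 - (n - 1) = (s - 1) * n := by omega
  rw [h3] at h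
  have h4 := factAux ((s - 1) * n) n hn
  have h5 : (s - 1) * n + (n - 1) = s * n - 1 := by omega
  rw [h5] at h4
  have := h.trans h4.symm
  have hpos : 0 < ((s - 1) * n)! := Nat.factorial_pos _
  apply Nat.eq_of_mul_eq_mul_left hpos
  calc ((s-1)*n)! * ((s * n - 1).choose (n - 1) * (n - 1)!)
      = (s * n - 1).choose (n - 1) * (n - 1)! * ((s-1)*n)! := by ring
    _ = ((s-1)*n)! * ∏ i ∈ Ico 1 n, ((s - 1) * n + i) := this

-- split product over Ico 1 (q*m) into non-multiples of q and multiples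
lemma prodSplit {M : Type*} [CommMonoid M] (f : ℕ → M) (q m : ℕ) (hq : 1 ≤ q) :
    ∏ i ∈ Ico 1 (q * m), f i =
      (∏ i ∈ (Ico 1 (q * m)).filter (fun i => ¬ q ∣ i), f i) * ∏ j ∈ Ico 1 m, f (q * j) := by
  rw [← Finset.prod_filter_mul_prod_filter_not (Ico 1 (q * m)) (fun i => q ∣ i) f, mul_comm]
  congr 1
  refine Finset.prod_nbij' (fun j => q * j) (fun i => i / q) ?_ ?_ ?_ ?_ ?_ |>.symm
  · intro j hj
    simp only [mem_Ico] at hj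
    simp only [mem_filter, mem_Ico]
    exact ⟨⟨by nlinarith, by exact (Nat.mul_lt_mul_left (by omega : 0 < q)).2 hj.2⟩, ⟨j, rfl⟩⟩
  · intro i hi
    simp only [mem_filter, mem_Ico] at hi
    obtain ⟨⟨h1, h2⟩, t, rfl⟩ := hi
    simp only [mem_Ico]
    rw [Nat.mul_div_cancel_left _ (by omega : 0 < q)]
    refine ⟨Nat.pos_of_ne_zero ?_, lt_of_mul_lt_mul_left h2 (by omega)⟩
    rintro rfl; simp at h1
  · intro j hj
    exact Nat.mul_div_cancel_left _ (by omega)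
  · intro i hi
    simp only [mem_filter] at hi
    exact Nat.mul_div_cancel' hi.2
  · intro j hj
    rfl

lemma natIdent (s q m : ℕ) (hs : 1 ≤ s) (hq : 1 ≤ q) (hm : 1 ≤ m) :
    (s * (q * m) - 1).choose (q * m - 1) *
        ∏ i ∈ (Ico 1 (q * m)).filter (fun i => ¬ q ∣ i), i =
      (s * m - 1).choose (m - 1) *
        ∏ i ∈ (Ico 1 (q * m)).filter (fun i => ¬ q ∣ i), ((s - 1) * (q * m) + i) := by
  have hn : 1 ≤ q * m := by nlinarith
  have hA := chooseProd s (q * m) hs hn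
  have hB := chooseProd s m hs hm
  have split1 : ∏ i ∈ Ico 1 (q * m), ((s - 1) * (q * m) + i)
      = (∏ i ∈ (Ico 1 (q * m)).filter (fun i => ¬ q ∣ i), ((s - 1) * (q * m) + i)) *
        (q ^ (m - 1) * ∏ j ∈ Ico 1 m, ((s - 1) * m + j)) := by
    rw [prodSplit (fun i => (s - 1) * (q * m) + i) q m hq]
    congr 1
    calc ∏ j ∈ Ico 1 m, ((s - 1) * (q * m) + q * j)
        = ∏ j ∈ Ico 1 m, (q * ((s - 1) * m + j)) :=
          Finset.prod_congr rfl fun j _ => by ring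
      _ = q ^ (m - 1) * ∏ j ∈ Ico 1 m, ((s - 1) * m + j) := by
          rw [Finset.prod_mul_distrib, Finset.prod_const, Nat.card_Ico]
  have fact_n : (q * m - 1)! = (∏ i ∈ (Ico 1 (q * m)).filter (fun i => ¬ q ∣ i), i) *
      (q ^ (m - 1) * (m - 1)!) := by
    have h0 : (q * m - 1)! = ∏ i ∈ Ico 1 (q * m), i := by
      rw [← prod_Ico_id_eq_factorial]
      congr 1
    rw [h0, prodSplit (fun i => i) q m hq]
    congr 1
    calc ∏ j ∈ Ico 1 m, q * j = q ^ (m - 1) * ∏ j ∈ Ico 1 m, j := by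
          rw [Finset.prod_mul_distrib, Finset.prod_const, Nat.card_Ico]
      _ = q ^ (m - 1) * (m - 1)! := by
          rw [← prod_Ico_id_eq_factorial]
          congr 2
  apply Nat.eq_of_mul_eq_mul_right
    (show 0 < q ^ (m - 1) * (m - 1)! from
      Nat.mul_pos (Nat.pow_pos (by omega)) (Nat.factorial_pos _))
  calc ((s * (q * m) - 1).choose (q * m - 1) *
          ∏ i ∈ (Ico 1 (q * m)).filter (fun i => ¬ q ∣ i), i) * (q ^ (m - 1) * (m - 1)!)
      = (s * (q * m) - 1).choose (q * m - 1) * (q * m - 1)! := by rw [fact_n]; ring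
    _ = ∏ i ∈ Ico 1 (q * m), ((s - 1) * (q * m) + i) := hA
    _ = (∏ i ∈ (Ico 1 (q * m)).filter (fun i => ¬ q ∣ i), ((s - 1) * (q * m) + i)) *
        (q ^ (m - 1) * ((s * m - 1).choose (m - 1) * (m - 1)!)) := by rw [split1, hB]
    _ = ((s * m - 1).choose (m - 1) *
          ∏ i ∈ (Ico 1 (q * m)).filter (fun i => ¬ q ∣ i), ((s - 1) * (q * m) + i)) *
        (q ^ (m - 1) * (m - 1)!) := by ring

-- pairing lemma: product over a set closed under i ↦ n - i with no fixed points
lemma pairProd {R : Type*} [CommMonoid R] (n : ℕ) (f g : ℕ → R) (T : Finset ℕ)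
    (hT : ∀ i ∈ T, 1 ≤ i ∧ i < n ∧ (n - i) ∈ T)
    (hfix : ∀ i ∈ T, 2 * i ≠ n)
    (hpair : ∀ i ∈ T, 2 * i < n → f i * f (n - i) = g i * g (n - i)) :
    ∏ i ∈ T, f i = ∏ i ∈ T, g i := by
  have key : ∀ h : ℕ → R,
      ∏ i ∈ T, h i = ∏ i ∈ T.filter (fun i => 2 * i < n), (h i * h (n - i)) := by
    intro h
    rw [← Finset.prod_filter_mul_prod_filter_not T (fun i => 2 * i < n) h,
      Finset.prod_mul_distrib]
    congr 1
    refine Finset.prod_nbij' (fun i => n - i) (fun i => n - i) ?_ ?_ ?_ ?_ ?_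
    · intro a ha
      simp only [mem_filter] at ha ⊢
      obtain ⟨haT, ha2⟩ := ha
      obtain ⟨h1, h2, h3⟩ := hT a haT
      exact ⟨h3, by have := hfix a haT; omega⟩
    · intro a ha
      simp only [mem_filter] at ha ⊢
      obtain ⟨haT, ha2⟩ := ha
      obtain ⟨h1, h2, h3⟩ := hT a haT
      refine ⟨h3, ?_⟩
      have := hfix (n - a) h3
      omega
    · intro a ha
      simp only [mem_filter] at ha
      have := (hT a ha.1).2.1
      omega
    · intro a ha
      simp only [mem_filter] at ha
      have := (hT a ha.1).2.1
      omega
    · intro a ha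
      simp only [mem_filter] at ha
      have := (hT a ha.1).2.1
      congr 1
      omega
  calc ∏ i ∈ T, f i = ∏ i ∈ T.filter (fun i => 2 * i < n), (f i * f (n - i)) := key f
    _ = ∏ i ∈ T.filter (fun i => 2 * i < n), (g i * g (n - i)) := by
        refine Finset.prod_congr rfl fun i hi => ?_
        simp only [mem_filter] at hi
        exact hpair i hi.1 hi.2
    _ = ∏ i ∈ T, g i := (key g).symm

lemma prodCong (s q k e : ℕ) (hs : Even s) (hs1 : 1 ≤ s) (hq : q.Prime) (hk : 1 ≤ k)
    (he : ¬ q ∣ e) (he1 : 1 ≤ e) :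
    ((∏ i ∈ (Ico 1 (q ^ k * e)).filter (fun i => ¬ q ∣ i), ((s - 1) * (q ^ k * e) + i) : ℕ) :
        ZMod (q ^ (2 * k))) =
      (if q = 2 ∧ k = 1 then -1 else 1) *
        ((∏ i ∈ (Ico 1 (q ^ k * e)).filter (fun i => ¬ q ∣ i), i : ℕ) : ZMod (q ^ (2 * k))) := by
  haveI : NeZero (q ^ (2 * k)) := ⟨pow_ne_zero _ hq.pos.ne'⟩
  set n := q ^ k * e with hn_def
  set c := (s - 1) * n with hc_def
  set T := (Ico 1 n).filter (fun i => ¬ q ∣ i) with hT_def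
  have hqk_n : q ^ k ∣ n := Dvd.intro e rfl
  have hqk_c : q ^ k ∣ c := Dvd.dvd.mul_left hqk_n (s - 1)
  have hqn : q ∣ n := dvd_trans (dvd_pow_self q (by omega)) hqk_n
  have hne : 1 ≤ n := Nat.mul_pos (pow_pos hq.pos k) he1
  have hT : ∀ i ∈ T, 1 ≤ i ∧ i < n ∧ (n - i) ∈ T := by
    intro i hi
    simp only [hT_def, mem_filter, mem_Ico] at hi ⊢
    refine ⟨hi.1.1, hi.1.2, ⟨⟨by omega, by omega⟩, ?_⟩⟩
    intro hdvd
    have : i = n - (n - i) := by omega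
    exact hi.2 (this ▸ Nat.dvd_sub hqn hdvd)
  have hc2 : (c : ZMod (q ^ (2 * k))) * (c : ZMod (q ^ (2 * k))) = 0 := by
    rw [← Nat.cast_mul, ZMod.natCast_eq_zero_iff]
    calc q ^ (2 * k) = q ^ k * q ^ k := by rw [← pow_add]; congr 1; omega
      _ ∣ c * c := mul_dvd_mul hqk_c hqk_c
  have hcn : (c : ZMod (q ^ (2 * k))) * (n : ZMod (q ^ (2 * k))) = 0 := by
    rw [← Nat.cast_mul, ZMod.natCast_eq_zero_iff]
    calc q ^ (2 * k) = q ^ k * q ^ k := by rw [← pow_add]; congr 1; omega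
      _ ∣ c * n := mul_dvd_mul hqk_c hqk_n
  have hpair : ∀ i ∈ T, 2 * i < n →
      (((c + i : ℕ) : ZMod (q ^ (2 * k))) * ((c + (n - i) : ℕ) : ZMod (q ^ (2 * k))) =
        ((i : ℕ) : ZMod (q ^ (2 * k))) * ((n - i : ℕ) : ZMod (q ^ (2 * k)))) := by
    intro i hi h2i
    obtain ⟨h1, h2, h3⟩ := hT i hi
    rw [Nat.cast_add, Nat.cast_add, Nat.cast_sub h2.le]
    have expand : ((c : ZMod (q ^ (2 * k))) + i) * ((c : ZMod (q ^ (2 * k))) + ((n : ZMod (q ^ (2 * k))) - i)) =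
        (c : ZMod (q ^ (2 * k))) * c + (c : ZMod (q ^ (2 * k))) * n +
          (i : ZMod (q ^ (2 * k))) * ((n : ZMod (q ^ (2 * k))) - i) := by ring
    rw [expand, hc2, hcn, zero_add, zero_add]
  rw [Nat.cast_prod, Nat.cast_prod]
  by_cases hcase : q = 2 ∧ k = 1
  · obtain ⟨rfl, rfl⟩ := hcase
    rw [if_pos ⟨rfl, rfl⟩]
    have heT : e ∈ T := by
      simp only [hT_def, mem_filter, mem_Ico]
      refine ⟨⟨he1, ?_⟩, he⟩
      simp only [hn_def]; omega
    rw [← Finset.mul_prod_erase T (fun i => ((c + i : ℕ) : ZMod (2 ^ (2 * 1)))) heT,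
        ← Finset.mul_prod_erase T (fun i => ((i : ℕ) : ZMod (2 ^ (2 * 1)))) heT]
    have hprod : ∏ i ∈ T.erase e, ((c + i : ℕ) : ZMod (2 ^ (2 * 1))) =
        ∏ i ∈ T.erase e, ((i : ℕ) : ZMod (2 ^ (2 * 1))) := by
      apply pairProd n
      · intro i hi
        rw [Finset.mem_erase] at hi
        obtain ⟨h1, h2, h3⟩ := hT i hi.2
        refine ⟨h1, h2, Finset.mem_erase.2 ⟨?_, h3⟩⟩
        have hn2 : n = 2 * e := by simp [hn_def]
        omega
      · intro i hi
        rw [Finset.mem_erase] at hi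
        have hn2 : n = 2 * e := by simp [hn_def]
        omega
      · intro i hi h2i
        exact hpair i (Finset.mem_erase.1 hi).2 h2i
    rw [hprod]
    have hfixval : ((c + e : ℕ) : ZMod (2 ^ (2 * 1))) = -1 * ((e : ℕ) : ZMod (2 ^ (2 * 1))) := by
      rw [neg_one_mul]
      apply eq_neg_of_add_eq_zero_left
      rw [← Nat.cast_add, ZMod.natCast_eq_zero_iff]
      obtain ⟨t, rfl⟩ := hs
      have : c + e + e = (t + t) * n := by
        simp only [hc_def]
        have : 1 ≤ t := by omega
        have hgood : (t + t - 1) * n + n = (t + t) * n := by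
          rw [Nat.sub_one_mul]
          have : n ≤ (t + t) * n := Nat.le_mul_of_pos_left n (by omega)
          omega
        have hn2 : n = 2 * e := by simp [hn_def]
        omega
      rw [this]
      have hn2 : n = 2 * e := by simp [hn_def]
      rw [hn2]
      exact ⟨t * e, by ring⟩
    rw [hfixval]
    ring
  · rw [if_neg hcase, one_mul]
    apply pairProd n _ _ T hT
    · intro i hiT heq
      simp only [hT_def, mem_filter] at hiT
      rcases eq_or_ne q 2 with rfl | hq2
      · have hk2 : 2 ≤ k := by
          rcases Nat.lt_or_ge k 2 with h | h
          · exact absurd ⟨rfl, by omega⟩ hcase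
          · exact h
        have : i = 2 ^ (k - 1) * e := by
          have h2 : 2 * i = 2 * (2 ^ (k - 1) * e) := by
            rw [heq, hn_def, ← mul_assoc, ← _root_.pow_succ']
            congr 2
            omega
          omega
        exact hiT.2 (this ▸ Dvd.dvd.mul_right (dvd_pow_self 2 (by omega)) e)
      · have : q ∣ 2 * i := heq ▸ hqn
        rcases (Nat.Prime.dvd_mul hq).1 this with h | h
        · exact hq2 ((Nat.prime_dvd_prime_iff_eq hq Nat.prime_two).1 h)
        · exact hiT.2 h
    · exact hpair

lemma coreCong (s q k e : ℕ) (hs : Even s) (hs1 : 1 ≤ s) (hq : q.Prime) (hk : 1 ≤ k)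
    (he : ¬ q ∣ e) (he1 : 1 ≤ e) :
    (((s * (q ^ k * e) - 1).choose (q ^ k * e - 1) : ℕ) : ZMod (q ^ (2 * k))) =
      (if q = 2 ∧ k = 1 then -1 else 1) *
        (((s * (q ^ (k - 1) * e) - 1).choose (q ^ (k - 1) * e - 1) : ℕ) : ZMod (q ^ (2 * k))) := by
  haveI : NeZero (q ^ (2 * k)) := ⟨pow_ne_zero _ hq.pos.ne'⟩
  set m := q ^ (k - 1) * e with hm_def
  have hqm : q * m = q ^ k * e := by
    rw [hm_def, ← mul_assoc, ← _root_.pow_succ']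
    congr 2
    omega
  have hm1 : 1 ≤ m := Nat.mul_pos (pow_pos hq.pos _) he1
  have hid := natIdent s q m hs1 hq.pos hm1
  rw [hqm] at hid
  have hcast := congrArg (fun x : ℕ => (x : ZMod (q ^ (2 * k)))) hid
  simp only [Nat.cast_mul] at hcast
  rw [prodCong s q k e hs hs1 hq hk he he1] at hcast
  have hD : IsUnit ((∏ i ∈ (Ico 1 (q ^ k * e)).filter (fun i => ¬ q ∣ i), i : ℕ) :
      ZMod (q ^ (2 * k))) := by
    rw [ZMod.isUnit_iff_coprime]
    apply Nat.Coprime.prod_left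
    intro i hi
    simp only [mem_filter] at hi
    exact (Nat.coprime_comm.1 (hq.coprime_iff_not_dvd.2 hi.2)).pow_right _
  apply hD.mul_right_cancel
  rw [hcast]
  ring

lemma diffDvd (s q k e : ℕ) (hs : Even s) (hs1 : 1 ≤ s) (hq : q.Prime) (hk : 1 ≤ k)
    (he : ¬ q ∣ e) (he1 : 1 ≤ e) :
    ((q : ℤ) ^ (2 * k)) ∣
      ((-1 : ℤ) ^ (q ^ k * e) * ((s * (q ^ k * e) - 1).choose (q ^ k * e - 1) : ℤ) -
        (-1 : ℤ) ^ (q ^ (k - 1) * e) *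
          ((s * (q ^ (k - 1) * e) - 1).choose (q ^ (k - 1) * e - 1) : ℤ)) := by
  haveI : NeZero (q ^ (2 * k)) := ⟨pow_ne_zero _ hq.pos.ne'⟩
  rw [show ((q : ℤ) ^ (2 * k)) = ((q ^ (2 * k) : ℕ) : ℤ) by push_cast; ring,
    ← ZMod.intCast_zmod_eq_zero_iff_dvd]
  push_cast
  rw [coreCong s q k e hs hs1 hq hk he he1]
  by_cases hc : q = 2 ∧ k = 1
  · obtain ⟨rfl, rfl⟩ := hc
    rw [if_pos ⟨rfl, rfl⟩]
    have h1 : Even (2 ^ 1 * e) := ⟨e, by ring⟩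
    have h2 : Odd (2 ^ (1 - 1) * e) := by
      rw [Nat.sub_self, pow_zero, one_mul]
      exact Nat.odd_iff.2 (by omega)
    rw [h1.neg_one_pow, h2.neg_one_pow]
    ring
  · rw [if_neg hc, one_mul]
    have hsign : ((-1 : ZMod (q ^ (2 * k))) ^ (q ^ k * e)) = (-1) ^ (q ^ (k - 1) * e) := by
      rcases eq_or_ne q 2 with rfl | hq2
      · have hk2 : 2 ≤ k := by
          rcases Nat.lt_or_ge k 2 with h | h
          · exact absurd ⟨rfl, by omega⟩ hc
          · exact h
        have h1 : Even (2 ^ k * e) := ⟨2 ^ (k - 1) * e, by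
          rw [← two_mul, ← mul_assoc, ← _root_.pow_succ']; congr 2; omega⟩
        have h2 : Even (2 ^ (k - 1) * e) := ⟨2 ^ (k - 2) * e, by
          rw [← two_mul, ← mul_assoc, ← _root_.pow_succ']; congr 2; omega⟩
        rw [h1.neg_one_pow, h2.neg_one_pow]
      · have hqm : q ^ k * e = q * (q ^ (k - 1) * e) := by
          rw [← mul_assoc, ← _root_.pow_succ']
          congr 2
          omega
        have hqodd := hq.odd_of_ne_two hq2
        rw [hqm, mul_comm q]
        rcases Nat.even_or_odd (q ^ (k - 1) * e) with hm | hm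
        · rw [(hm.mul_right q).neg_one_pow, hm.neg_one_pow]
        · rw [(hm.mul hqodd).neg_one_pow, hm.neg_one_pow]
    rw [hsign]
    ring

lemma sumDivCop {R : Type*} [AddCommMonoid R] (a b : ℕ) (hab : a.Coprime b) (ha : a ≠ 0)
    (hb : b ≠ 0) (F : ℕ → R) :
    ∑ d ∈ (a * b).divisors, F d = ∑ u ∈ a.divisors, ∑ e ∈ b.divisors, F (u * e) := by
  rw [← Finset.sum_product']
  refine Finset.sum_nbij' (fun d => (d.gcd a, d.gcd b)) (fun p => p.1 * p.2) ?_ ?_ ?_ ?_ ?_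
  · intro d hd
    rw [Nat.mem_divisors] at hd
    simp only [Finset.mem_product, Nat.mem_divisors]
    exact ⟨⟨Nat.gcd_dvd_right d a, ha⟩, ⟨Nat.gcd_dvd_right d b, hb⟩⟩
  · intro p hp
    simp only [Finset.mem_product, Nat.mem_divisors] at hp
    exact Nat.mem_divisors.2 ⟨mul_dvd_mul hp.1.1 hp.2.1, mul_ne_zero ha hb⟩
  · intro d hd
    rw [Nat.mem_divisors] at hd
    exact (Nat.gcd_mul_gcd_eq_iff_dvd_mul_of_coprime hab).2 hd.1
  · intro p hp
    simp only [Finset.mem_product, Nat.mem_divisors] at hp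
    obtain ⟨⟨hu, -⟩, ⟨hev, -⟩⟩ := hp
    have h1 : (p.1 * p.2).gcd a = p.1 := by
      rw [Nat.Coprime.gcd_mul_right_cancel p.1 (Nat.Coprime.coprime_dvd_left hev hab.symm)]
      exact Nat.gcd_eq_left hu
    have h2 : (p.1 * p.2).gcd b = p.2 := by
      rw [Nat.Coprime.gcd_mul_left_cancel p.2 (Nat.Coprime.coprime_dvd_left hu hab)]
      exact Nat.gcd_eq_left hev
    rw [h1, h2]
  · intro d hd
    rw [Nat.mem_divisors] at hd
    dsimp only
    rw [(Nat.gcd_mul_gcd_eq_iff_dvd_mul_of_coprime hab).2 hd.1]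

def aSeq (s d : ℕ) : ℤ := (-1 : ℤ) ^ d * (((s * d - 1).choose (d - 1) : ℕ) : ℤ)

lemma divComp (q k j m e : ℕ) (hq : 0 < q) (he : e ∣ m) (he0 : 0 < e) (hj : j ≤ k) :
    (q ^ k * m) / (q ^ j * e) = q ^ (k - j) * (m / e) := by
  have h1 : q ^ k * m = (q ^ j * e) * (q ^ (k - j) * (m / e)) := by
    rw [show (q ^ j * e) * (q ^ (k - j) * (m / e)) = (q ^ j * q ^ (k - j)) * (e * (m / e)) by ring,
      ← pow_add, Nat.mul_div_cancel' he]
    congr 2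
    omega
  rw [h1, Nat.mul_div_cancel_left _ (Nat.mul_pos (pow_pos hq j) he0)]

lemma primePart (s : ℕ) (hs : Even s) (hs1 : 1 ≤ s) (q k m : ℕ) (hq : q.Prime) (hk : 1 ≤ k)
    (hm : 1 ≤ m) (hqm : ¬ q ∣ m) :
    (q : ℤ) ^ (2 * k) ∣ ∑ d ∈ (q ^ k * m).divisors,
      (ArithmeticFunction.moebius d : ℤ) * aSeq s ((q ^ k * m) / d) := by
  have hcopqm : Nat.Coprime q m := hq.coprime_iff_not_dvd.2 hqm
  have hcop : (q ^ k).Coprime m := Nat.Coprime.pow_left _ hcopqm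
  rw [sumDivCop _ _ hcop (pow_ne_zero _ hq.pos.ne') (by omega)
    (fun d => (ArithmeticFunction.moebius d : ℤ) * aSeq s ((q ^ k * m) / d))]
  rw [Nat.sum_divisors_prime_pow hq]
  have hk1 : k + 1 = (k - 1) + 1 + 1 := by omega
  rw [hk1, Finset.sum_range_succ', Finset.sum_range_succ']
  have hzero : ∀ i ∈ Finset.range (k - 1),
      (∑ e ∈ m.divisors, (ArithmeticFunction.moebius ((q ^ (i + 1 + 1)) * e) : ℤ) *
        aSeq s ((q ^ k * m) / (q ^ (i + 1 + 1) * e))) = 0 := by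
    intro i _
    apply Finset.sum_eq_zero
    intro e he
    have hecop : (q ^ (i + 1 + 1)).Coprime e :=
      Nat.Coprime.pow_left _ (hcopqm.coprime_dvd_right (Nat.mem_divisors.1 he).1)
    rw [ArithmeticFunction.isMultiplicative_moebius.map_mul_of_coprime hecop,
      ArithmeticFunction.moebius_apply_prime_pow hq (by omega), if_neg (by omega)]
    simp
  rw [Finset.sum_eq_zero hzero, zero_add]
  have hstep : ∀ e ∈ m.divisors,
      (ArithmeticFunction.moebius ((q ^ (0 + 1)) * e) : ℤ) *
          aSeq s ((q ^ k * m) / (q ^ (0 + 1) * e)) +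
        (ArithmeticFunction.moebius ((q ^ 0) * e) : ℤ) * aSeq s ((q ^ k * m) / (q ^ 0 * e)) =
      (ArithmeticFunction.moebius e : ℤ) *
        (aSeq s (q ^ k * (m / e)) - aSeq s (q ^ (k - 1) * (m / e))) := by
    intro e he
    obtain ⟨hedvd, -⟩ := Nat.mem_divisors.1 he
    have he0 : 0 < e := Nat.pos_of_dvd_of_pos hedvd (by omega)
    have hecop : q.Coprime e := hcopqm.coprime_dvd_right hedvd
    have hd1 : (q ^ k * m) / (q ^ (0 + 1) * e) = q ^ (k - 1) * (m / e) :=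
      divComp q k 1 m e hq.pos hedvd he0 hk
    have hd0 : (q ^ k * m) / (q ^ 0 * e) = q ^ k * (m / e) := by
      have := divComp q k 0 m e hq.pos hedvd he0 (by omega)
      simpa using this
    rw [hd1, hd0, pow_zero, one_mul, pow_one,
      ArithmeticFunction.isMultiplicative_moebius.map_mul_of_coprime hecop,
      ArithmeticFunction.moebius_apply_prime hq]
    push_cast
    ring
  rw [Finset.sum_add_distrib.symm.trans (Finset.sum_congr rfl hstep)]
  apply Finset.dvd_sum
  intro e he
  obtain ⟨hedvd, -⟩ := Nat.mem_divisors.1 he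
  apply dvd_mul_of_dvd_right
  have hme : 1 ≤ m / e :=
    Nat.one_le_div_iff (Nat.pos_of_dvd_of_pos hedvd (by omega)) |>.2 (Nat.le_of_dvd (by omega) hedvd)
  have hmeq : ¬ q ∣ (m / e) := fun h => hqm (h.trans (Nat.div_dvd_of_dvd hedvd))
  exact diffDvd s q k (m / e) hs hs1 hq hk hmeq hme

lemma keyDvd (s : ℕ) (hs : Even s) (hs1 : 1 ≤ s) (r : ℕ) (hr : 1 ≤ r) :
    (r : ℤ) ^ 2 ∣ ∑ d ∈ r.divisors,
      (ArithmeticFunction.moebius (r / d) : ℤ) * (-1 : ℤ) ^ d *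
        (((s * d - 1).choose (d - 1) : ℕ) : ℤ) := by
  have hr0 : r ≠ 0 := by omega
  have hrw : ∑ d ∈ r.divisors, (ArithmeticFunction.moebius (r / d) : ℤ) * (-1 : ℤ) ^ d *
        (((s * d - 1).choose (d - 1) : ℕ) : ℤ) =
      ∑ d ∈ r.divisors, (ArithmeticFunction.moebius d : ℤ) * aSeq s (r / d) := by
    rw [← Nat.sum_div_divisors r (fun d => (ArithmeticFunction.moebius (r / d) : ℤ) *
      (-1 : ℤ) ^ d * (((s * d - 1).choose (d - 1) : ℕ) : ℤ))]
    apply Finset.sum_congr rfl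
    intro d hd
    have hdd : r / (r / d) = d := Nat.div_div_self (Nat.mem_divisors.1 hd).1 hr0
    rw [hdd, mul_assoc]
    rfl
  rw [hrw]
  have h1 : r = ∏ p ∈ r.primeFactors, p ^ r.factorization p := by
    conv_lhs => rw [← Nat.factorization_prod_pow_eq_self hr0]
    rw [Nat.prod_factorization_eq_prod_primeFactors]
  have hfact : (r : ℤ) ^ 2 = ∏ p ∈ r.primeFactors, (p : ℤ) ^ (2 * r.factorization p) := by
    calc (r : ℤ) ^ 2 = ((∏ p ∈ r.primeFactors, p ^ r.factorization p : ℕ) : ℤ) ^ 2 := by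
          rw [← h1]
      _ = ∏ p ∈ r.primeFactors, (p : ℤ) ^ (2 * r.factorization p) := by
          push_cast
          rw [← Finset.prod_pow]
          refine Finset.prod_congr rfl fun p _ => ?_
          rw [← pow_mul, mul_comm 2]
  rw [hfact]
  apply Finset.prod_dvd_of_coprime
  · intro p hp q hq hne
    exact (Nat.isCoprime_iff_coprime.2
      ((Nat.coprime_primes (Nat.prime_of_mem_primeFactors hp)
        (Nat.prime_of_mem_primeFactors hq)).2 hne)).pow
  · intro p hp
    have hpp := Nat.prime_of_mem_primeFactors hp
    have hk : 1 ≤ r.factorization p :=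
      hpp.factorization_pos_of_dvd hr0 (Nat.dvd_of_mem_primeFactors hp)
    have hrm : p ^ r.factorization p * (r / p ^ r.factorization p) = r :=
      Nat.ordProj_mul_ordCompl_eq_self r p
    have hqm : ¬ p ∣ (r / p ^ r.factorization p) := Nat.not_dvd_ordCompl hpp hr0
    have hm1 : 1 ≤ r / p ^ r.factorization p := Nat.ordCompl_pos p hr0
    have := primePart s hs hs1 p (r.factorization p) (r / p ^ r.factorization p) hpp hk hm1 hqm
    rw [hrm] at this
    exact this

theorem stmt18 (p : ℤ) (hp : 2 ≤ p) (r : ℕ) (hr : 1 ≤ r) :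
    (((r : ℤ) ^ 2) ∣
        ∑ d ∈ r.divisors, (ArithmeticFunction.moebius (r / d) : ℤ) *
          (-1 : ℤ) ^ (d + 1) * ((2 * d - 1).choose (d - 1) : ℤ)) ∧
      (((r : ℤ) ^ 2) ∣
        ∑ d ∈ r.divisors, (ArithmeticFunction.moebius (r / d) : ℤ) *
          (-1 : ℤ) ^ d * (((2 * p + 2).toNat * d - 1).choose (d - 1) : ℤ)) := by
  constructor
  · have h2 := keyDvd 2 ⟨1, rfl⟩ (by norm_num) r hr
    have heq : ∑ d ∈ r.divisors, (ArithmeticFunction.moebius (r / d) : ℤ) *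
          (-1 : ℤ) ^ (d + 1) * ((2 * d - 1).choose (d - 1) : ℤ) =
        -∑ d ∈ r.divisors, (ArithmeticFunction.moebius (r / d) : ℤ) *
          (-1 : ℤ) ^ d * ((2 * d - 1).choose (d - 1) : ℤ) := by
      rw [← Finset.sum_neg_distrib]
      refine Finset.sum_congr rfl fun d _ => ?_
      rw [pow_succ]
      ring
    rw [heq]
    exact dvd_neg.2 h2
  · have hnn : (0 : ℤ) ≤ 2 * p + 2 := by linarith
    have hcast : (((2 * p + 2).toNat : ℤ)) = 2 * p + 2 := Int.toNat_of_nonneg hnn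
    have hev : Even ((2 * p + 2).toNat) := by
      rw [← Int.even_coe_nat, hcast]
      exact ⟨p + 1, by ring⟩
    have hs1 : 1 ≤ (2 * p + 2).toNat := by
      have : (1 : ℤ) ≤ ((2 * p + 2).toNat : ℤ) := by rw [hcast]; linarith
      exact_mod_cast this
    exact keyDvd ((2 * p + 2).toNat) hev hs1 r hr
end
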